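/- arXiv:2501.14125 — 4 statements merged into one kernel-verified Lean document; each statement's English description precedes it below -/
import Mathlib

section
/- For k ∈ [1,n], the number χ_k^{(n)} of Temperley–Lieb diagrams on n points with exactly k arcs exposed to the left side satisfies χ_k^{(n)} = Σ_{(i_1,...,i_k)} C_{i_1}···C_{i_k}, where the sum is over all tuples (i_1,...,i_k) of nonnegative integers with i_1 + ... + i_k = n - k, and C_m denotes the m-th Catalan number. -/
open Finset

/-- `l` encodes a (non-degenerate) indexing matrix on `n` points: the columns,
listed left to right, as pairs `(top entry, bottom entry)`.  Entries lie in
`[0, n-1]`, the first row is strictly increasing, the second row is weakly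
increasing, repeated second-row entries are `0`, and each top entry is at
least the corresponding bottom entry. -/
def IsIndexingMatrix (n : ℕ) (l : List (ℕ × ℕ)) : Prop :=
  1 ≤ l.length ∧ l.length ≤ n ∧
  (∀ p ∈ l, p.1 < n ∧ p.2 ≤ p.1) ∧
  l.Pairwise (fun p q => p.1 < q.1 ∧ p.2 ≤ q.2 ∧ (p.2 = q.2 → p.2 = 0))

/-- A positive indexing matrix: all entries are positive. -/
def IsPositiveIndexingMatrix (n : ℕ) (l : List (ℕ × ℕ)) : Prop :=
  IsIndexingMatrix n l ∧ ∀ p ∈ l, 0 < p.1 ∧ 0 < p.2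

/-- `θ_k^{(n)}`: the number of positive indexing matrices whose `(1,1)` entry
equals `k`. -/
noncomputable def theta (n k : ℕ) : ℕ :=
  Nat.card {l : List (ℕ × ℕ) //
    IsPositiveIndexingMatrix n l ∧ l.head?.map Prod.fst = some k}

/-- The blob-rank of an indexing matrix: the number of its columns containing
a `0`. -/
def blobRank (l : List (ℕ × ℕ)) : ℕ := l.countP (fun p => p.1 == 0 || p.2 == 0)

/-- `Ω_r^{(n)}`: the number of indexing matrices on `n` points of blob-rank `r`,
the degenerate indexing matrix being counted in `Ω_0^{(n)}`. -/
noncomputable def Omega (n r : ℕ) : ℕ :=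
  Nat.card {l : List (ℕ × ℕ) // IsIndexingMatrix n l ∧ blobRank l = r} +
    (if r = 0 then 1 else 0)

/-- `χ_k^{(n)} = Σ_{i₁+⋯+i_k = n-k} C_{i₁} ⋯ C_{i_k}` (Catalan numbers). -/
def chi (n k : ℕ) : ℕ :=
  ∑ t ∈ Finset.Nat.antidiagonalTuple k (n - k), ∏ j, catalan (t j)

/-- A Temperley–Lieb diagram on `n` points: a non-crossing perfect matching of
`2n` boundary points numbered clockwise, given by a fixed-point free
involution. -/
structure TLDiagram (n : ℕ) where
  f : Fin (2 * n) → Fin (2 * n)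
  involutive : ∀ x, f (f x) = x
  noFixedPoint : ∀ x, f x ≠ x
  noncrossing : ∀ a b : Fin (2 * n), a < b → b < f a → f a < f b → False

/-- `a` is the left (smaller) endpoint of an arc of `D`. -/
def TLDiagram.IsArc {n : ℕ} (D : TLDiagram n) (a : Fin (2 * n)) : Prop :=
  a < D.f a

/-- The arc with left endpoint `a` is exposed to the left side of the diagram,
i.e. it is not nested inside any other arc. -/
def TLDiagram.IsExposed {n : ℕ} (D : TLDiagram n) (a : Fin (2 * n)) : Prop :=
  a < D.f a ∧ ∀ c, ¬ (c < a ∧ D.f a < D.f c)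

/-- The number of arcs of `D` exposed to the left side. -/
noncomputable def exposedCount {n : ℕ} (D : TLDiagram n) : ℕ :=
  Nat.card {a : Fin (2 * n) // D.IsExposed a}

/-- A `d`-abacus blob diagram on `n` points: a TL-diagram together with blobs
on some arcs exposed to the left, one bead count in `ℤ/dℤ` on every arc, and
an extra bead count on every blobbed arc (its second component). -/
structure AbacusBlobDiagram (d n : ℕ) where
  base : TLDiagram n
  blob : Fin (2 * n) → Bool
  blob_exposed : ∀ a, blob a = true → base.IsExposed a
  beads₁ : Fin (2 * n) → ZMod d
  beads₂ : Fin (2 * n) → ZMod d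
  beads₁_arc : ∀ a, ¬ base.IsArc a → beads₁ a = 0
  beads₂_blob : ∀ a, blob a = false → beads₂ a = 0

/-- A `d`-abacus hook diagram on `n` points: a blobbed TL-diagram in which all
blobbed arcs are merged into the single hook component through `0, 0'`, with a
bead count in `ℤ/dℤ` on every unblobbed arc and one on the hook component. -/
structure AbacusHookDiagram (d n : ℕ) where
  base : TLDiagram n
  blob : Fin (2 * n) → Bool
  blob_exposed : ∀ a, blob a = true → base.IsExposed a
  beads : Fin (2 * n) → ZMod d
  beads_arc : ∀ a, ¬ base.IsArc a ∨ blob a = true → beads a = 0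
  hookBeads : ZMod d

namespace TL11

/-- A non-crossing fixed-point-free involution on `[0, 2n)`, extended by the
identity elsewhere. -/
structure NM (n : ℕ) where
  f : ℕ → ℕ
  small : ∀ x, x < 2 * n → f x < 2 * n
  big : ∀ x, 2 * n ≤ x → f x = x
  invol : ∀ x, f (f x) = x
  nofix : ∀ x, x < 2 * n → f x ≠ x
  nc : ∀ a b, a < b → b < f a → f a < f b → False

theorem NM.ext' {n : ℕ} {m₁ m₂ : NM n} (h : m₁.f = m₂.f) : m₁ = m₂ := by
  cases m₁; cases m₂; simpa using h

def NM.Exposed {n : ℕ} (m : NM n) (a : ℕ) : Prop :=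
  a < m.f a ∧ ∀ c, ¬ (c < a ∧ m.f a < m.f c)

lemma NM.exposed_lt {n : ℕ} (m : NM n) {a : ℕ} (h : m.Exposed a) : a < 2 * n := by
  by_contra hc
  have h2 := m.big a (by omega)
  have h1 := h.1
  omega

instance exposedFinite {n : ℕ} (m : NM n) : Finite {a : ℕ // m.Exposed a} :=
  Finite.of_injective (fun x => (⟨x.1, m.exposed_lt x.2⟩ : Fin (2 * n)))
    (fun x y h => Subtype.ext (by simpa using congrArg Fin.val h))

noncomputable def NM.ecount {n : ℕ} (m : NM n) : ℕ := Nat.card {a : ℕ // m.Exposed a}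

theorem TLDiagram.ext' {n : ℕ} {D₁ D₂ : TLDiagram n} (h : D₁.f = D₂.f) : D₁ = D₂ := by
  cases D₁; cases D₂; simpa using h

instance {n : ℕ} : Finite (TLDiagram n) :=
  Finite.of_injective TLDiagram.f (fun _ _ h => TLDiagram.ext' h)

def tf {n : ℕ} (D : TLDiagram n) (x : ℕ) : ℕ :=
  if h : x < 2 * n then (D.f ⟨x, h⟩ : ℕ) else x

lemma tf_lt {n : ℕ} (D : TLDiagram n) {x : ℕ} (hx : x < 2 * n) :
    tf D x = (D.f ⟨x, hx⟩ : ℕ) := dif_pos hx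

lemma tf_ge {n : ℕ} (D : TLDiagram n) {x : ℕ} (hx : 2 * n ≤ x) : tf D x = x :=
  dif_neg (by omega)

def toNM {n : ℕ} (D : TLDiagram n) : NM n where
  f := tf D
  small x hx := by rw [tf_lt D hx]; exact (D.f ⟨x, hx⟩).isLt
  big x hx := tf_ge D hx
  invol x := by
    rcases Nat.lt_or_ge x (2 * n) with h | h
    · rw [tf_lt D h, tf_lt D (D.f ⟨x, h⟩).isLt]
      simpa using congrArg Fin.val (D.involutive ⟨x, h⟩)
    · rw [tf_ge D h, tf_ge D h]
  nofix x hx h := by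
    rw [tf_lt D hx] at h
    exact D.noFixedPoint ⟨x, hx⟩ (Fin.ext h)
  nc a b hab hbf hff := by
    rcases Nat.lt_or_ge a (2 * n) with ha | ha
    · rw [tf_lt D ha] at hbf hff
      have hb : b < 2 * n := lt_trans hbf (D.f ⟨a, ha⟩).isLt
      rw [tf_lt D hb] at hff
      exact D.noncrossing ⟨a, ha⟩ ⟨b, hb⟩ hab hbf hff
    · rw [tf_ge D ha] at hbf; omega

def ofNM {n : ℕ} (m : NM n) : TLDiagram n where
  f x := ⟨m.f x, m.small x x.isLt⟩
  involutive x := Fin.ext (m.invol x)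
  noFixedPoint x h := m.nofix x x.isLt (congrArg Fin.val h)
  noncrossing a b h1 h2 h3 := m.nc a b h1 h2 h3

def equivNM (n : ℕ) : TLDiagram n ≃ NM n where
  toFun := toNM
  invFun := ofNM
  left_inv D := TLDiagram.ext' (funext fun x => Fin.ext (by
    show ((ofNM (toNM D)).f x : ℕ) = (D.f x : ℕ)
    rw [show ((ofNM (toNM D)).f x : ℕ) = tf D x.val from rfl, tf_lt D x.isLt, Fin.eta]))
  right_inv m := NM.ext' (funext fun x => by
    show tf (ofNM m) x = m.f x
    by_cases h : x < 2 * n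
    · rw [tf_lt _ h]; rfl
    · rw [tf_ge _ (by omega)]
      exact (m.big x (by omega)).symm)

instance {n : ℕ} : Finite (NM n) := Finite.of_equiv _ (equivNM n)

lemma toNM_f {n : ℕ} (D : TLDiagram n) {x : ℕ} (hx : x < 2 * n) :
    (toNM D).f x = (D.f ⟨x, hx⟩ : ℕ) := tf_lt D hx

lemma toNM_f_fin {n : ℕ} (D : TLDiagram n) (a : Fin (2 * n)) :
    (toNM D).f (a : ℕ) = (D.f a : ℕ) := by
  rw [toNM_f D a.isLt, Fin.eta]

lemma exposed_iff {n : ℕ} (D : TLDiagram n) (a : Fin (2 * n)) :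
    D.IsExposed a ↔ (toNM D).Exposed (a : ℕ) := by
  unfold TLDiagram.IsExposed NM.Exposed
  constructor
  · rintro ⟨h1, h2⟩
    refine ⟨by rw [toNM_f_fin]; exact h1, fun c => ?_⟩
    rintro ⟨hc1, hc2⟩
    rcases Nat.lt_or_ge c (2 * n) with hcn | hcn
    · rw [toNM_f_fin, toNM_f D hcn] at hc2
      exact h2 ⟨c, hcn⟩ ⟨hc1, hc2⟩
    · rw [toNM_f_fin, (toNM D).big c (by omega)] at hc2
      have ha := a.isLt
      omega
  · rintro ⟨h1, h2⟩
    rw [toNM_f_fin] at h1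
    refine ⟨h1, fun c => ?_⟩
    rintro ⟨hc1, hc2⟩
    refine h2 c.val ⟨hc1, ?_⟩
    rw [toNM_f_fin, toNM_f_fin]
    exact hc2

lemma ecount_toNM {n : ℕ} (D : TLDiagram n) : (toNM D).ecount = exposedCount D := by
  apply Nat.card_congr
  exact {
    toFun := fun x => ⟨⟨x.1, (toNM D).exposed_lt x.2⟩, (exposed_iff D _).2 x.2⟩
    invFun := fun x => ⟨x.1.val, (exposed_iff D x.1).1 x.2⟩
    left_inv := fun x => Subtype.ext rfl
    right_inv := fun x => Subtype.ext (Fin.ext rfl) }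

/-! ### Splitting at the first arc -/

def iOf {n : ℕ} (m : NM (n + 1)) : ℕ := (m.f 0 - 1) / 2

lemma f0_pos {n : ℕ} (m : NM (n + 1)) : 0 < m.f 0 :=
  Nat.pos_of_ne_zero fun h => m.nofix 0 (by omega) h

lemma f0_lt {n : ℕ} (m : NM (n + 1)) : m.f 0 < 2 * (n + 1) := m.small 0 (by omega)

lemma closureA {n : ℕ} (m : NM (n + 1)) {x : ℕ} (h1 : 0 < x) (h2 : x < m.f 0) :
    0 < m.f x ∧ m.f x < m.f 0 := by
  have hx2 : x < 2 * (n + 1) := by have := f0_lt m; omega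
  have hne0 : m.f x ≠ 0 := by
    intro h
    have h3 := m.invol x
    rw [h] at h3
    omega
  have hnev : m.f x ≠ m.f 0 := by
    intro h
    have h3 := m.invol x
    rw [h, m.invol 0] at h3
    omega
  have hnotgt : ¬ (m.f 0 < m.f x) := fun h => m.nc 0 x h1 h2 h
  omega

lemma closureB {n : ℕ} (m : NM (n + 1)) {x : ℕ} (h1 : m.f 0 < x) (h2 : x < 2 * (n + 1)) :
    m.f 0 < m.f x := by
  have hne0 : m.f x ≠ 0 := by
    intro h
    have h3 := m.invol x
    rw [h] at h3
    omega
  have hnev : m.f x ≠ m.f 0 := by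
    intro h
    have h3 := m.invol x
    rw [h, m.invol 0] at h3
    have := f0_pos m
    omega
  by_contra hlt
  have hx1 : 0 < m.f x := by omega
  have hx2 : m.f x < m.f 0 := by omega
  have := closureA m hx1 hx2
  rw [m.invol x] at this
  omega

lemma even_card_invol (f : ℕ → ℕ) :
    ∀ S : Finset ℕ, (∀ x ∈ S, f x ∈ S) → (∀ x ∈ S, f (f x) = x) →
      (∀ x ∈ S, f x ≠ x) → Even S.card := by
  intro S
  induction S using Finset.strongInduction with
  | _ S ih =>
    intro hmem hinv hne
    rcases S.eq_empty_or_nonempty with rfl | ⟨a, ha⟩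
    · simp
    · have hfa : f a ∈ S := hmem a ha
      have hfa' : f a ≠ a := hne a ha
      set T := (S.erase a).erase (f a) with hT
      have hTsub : T ⊆ S := fun x hx => by
        simp only [hT, Finset.mem_erase] at hx; exact hx.2.2
      have hTss : T ⊂ S :=
        Finset.ssubset_of_subset_of_ssubset (Finset.erase_subset _ _)
          (Finset.erase_ssubset ha)
      have hmemT : ∀ x ∈ T, f x ∈ T := by
        intro x hx
        simp only [hT, Finset.mem_erase] at hx ⊢
        obtain ⟨hx1, hx2, hx3⟩ := hx
        refine ⟨?_, ?_, hmem x hx3⟩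
        · intro h; exact hx2 (by rw [← hinv x hx3, h, hinv a ha])
        · intro h; exact hx1 (by rw [← hinv x hx3, h])
      have hcard : T.card + 2 = S.card := by
        have h2 : 1 < S.card := Finset.one_lt_card.2 ⟨a, ha, f a, hfa, hfa'.symm⟩
        rw [hT, Finset.card_erase_of_mem (Finset.mem_erase.2 ⟨hfa', hfa⟩),
          Finset.card_erase_of_mem ha]
        omega
      have hE := ih T hTss (fun x hx => hmemT x hx)
        (fun x hx => hinv x (hTsub hx)) (fun x hx => hne x (hTsub hx))
      obtain ⟨t, ht⟩ := hE
      exact ⟨t + 1, by omega⟩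

lemma f0_odd {n : ℕ} (m : NM (n + 1)) : m.f 0 = 2 * iOf m + 1 := by
  have hE : Even ((Finset.Ico 1 (m.f 0)).card) := by
    apply even_card_invol m.f
    · intro x hx
      rw [Finset.mem_Ico] at hx ⊢
      have := closureA m (x := x) (by omega) (by omega)
      omega
    · intro x _; exact m.invol x
    · intro x hx
      rw [Finset.mem_Ico] at hx
      exact m.nofix x (by have := f0_lt m; omega)
  rw [Nat.card_Ico] at hE
  have h0 := f0_pos m
  obtain ⟨t, ht⟩ := hE
  unfold iOf
  omega

lemma iOf_le {n : ℕ} (m : NM (n + 1)) : iOf m ≤ n := by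
  have := f0_lt m
  have := f0_odd m
  omega

def d1f {n : ℕ} (m : NM (n + 1)) (x : ℕ) : ℕ :=
  if x < 2 * iOf m then m.f (x + 1) - 1 else x

lemma d1f_eq {n : ℕ} (m : NM (n + 1)) (x : ℕ) :
    d1f m x = if x < 2 * iOf m then m.f (x + 1) - 1 else x := rfl

def d2f {n : ℕ} (m : NM (n + 1)) (x : ℕ) : ℕ :=
  if x < 2 * (n - iOf m) then m.f (x + 2 * iOf m + 2) - (2 * iOf m + 2) else x

lemma d2f_eq {n : ℕ} (m : NM (n + 1)) (x : ℕ) :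
    d2f m x = if x < 2 * (n - iOf m) then m.f (x + 2 * iOf m + 2) - (2 * iOf m + 2) else x :=
  rfl

def d1 {n : ℕ} (m : NM (n + 1)) : NM (iOf m) where
  f := d1f m
  small x hx := by
    rw [d1f_eq, if_pos hx]
    have hv := f0_odd m
    have := closureA m (x := x + 1) (by omega) (by omega)
    omega
  big x hx := by rw [d1f_eq, if_neg (by omega)]
  invol x := by
    by_cases hx : x < 2 * iOf m
    · have hv := f0_odd m
      have h1 := closureA m (x := x + 1) (by omega) (by omega)
      rw [d1f_eq m x, if_pos hx, d1f_eq, if_pos (by omega : m.f (x + 1) - 1 < 2 * iOf m),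
        (by omega : m.f (x + 1) - 1 + 1 = m.f (x + 1)), m.invol]
      omega
    · rw [d1f_eq m x, if_neg hx, d1f_eq m x, if_neg hx]
  nofix x hx := by
    rw [d1f_eq, if_pos hx]
    have hv := f0_odd m
    have h1 := closureA m (x := x + 1) (by omega) (by omega)
    have h2 := m.nofix (x + 1) (by have := f0_lt m; omega)
    omega
  nc a b hab hbf hff := by
    simp only [d1f_eq] at hbf hff
    by_cases ha : a < 2 * iOf m
    · rw [if_pos ha] at hbf hff
      have hb : b < 2 * iOf m := by
        by_contra hb
        rw [if_neg hb] at hff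
        omega
      rw [if_pos hb] at hff
      have hv := f0_odd m
      have h1 := closureA m (x := a + 1) (by omega) (by omega)
      have h2 := closureA m (x := b + 1) (by omega) (by omega)
      exact m.nc (a + 1) (b + 1) (by omega) (by omega) (by omega)
    · rw [if_neg ha] at hbf; omega

def d2 {n : ℕ} (m : NM (n + 1)) : NM (n - iOf m) where
  f := d2f m
  small x hx := by
    rw [d2f_eq, if_pos hx]
    have hv := f0_odd m
    have hi := iOf_le m
    have h1 := closureB m (x := x + 2 * iOf m + 2) (by omega) (by omega)
    have h2 := m.small (x + 2 * iOf m + 2) (by omega)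
    omega
  big x hx := by rw [d2f_eq, if_neg (by omega)]
  invol x := by
    by_cases hx : x < 2 * (n - iOf m)
    · have hv := f0_odd m
      have hi := iOf_le m
      have h1 := closureB m (x := x + 2 * iOf m + 2) (by omega) (by omega)
      have h1' := m.small (x + 2 * iOf m + 2) (by omega)
      rw [d2f_eq m x, if_pos hx, d2f_eq,
        if_pos (by omega : m.f (x + 2 * iOf m + 2) - (2 * iOf m + 2) < 2 * (n - iOf m)),
        (by omega :
          m.f (x + 2 * iOf m + 2) - (2 * iOf m + 2) + 2 * iOf m + 2
            = m.f (x + 2 * iOf m + 2)),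
        m.invol]
      omega
    · rw [d2f_eq m x, if_neg hx, d2f_eq m x, if_neg hx]
  nofix x hx := by
    rw [d2f_eq, if_pos hx]
    have hv := f0_odd m
    have hi := iOf_le m
    have h1 := closureB m (x := x + 2 * iOf m + 2) (by omega) (by omega)
    have h2 := m.nofix (x + 2 * iOf m + 2) (by omega)
    omega
  nc a b hab hbf hff := by
    simp only [d2f_eq] at hbf hff
    by_cases ha : a < 2 * (n - iOf m)
    · rw [if_pos ha] at hbf hff
      have hb : b < 2 * (n - iOf m) := by
        by_contra hb
        rw [if_neg hb] at hff
        omega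
      rw [if_pos hb] at hff
      have hv := f0_odd m
      have hi := iOf_le m
      have h1 := closureB m (x := a + 2 * iOf m + 2) (by omega) (by omega)
      have h2 := closureB m (x := b + 2 * iOf m + 2) (by omega) (by omega)
      exact m.nc (a + 2 * iOf m + 2) (b + 2 * iOf m + 2) (by omega) (by omega) (by omega)
    · rw [if_neg ha] at hbf; omega

/-! ### Combining -/

def cf (i n : ℕ) (g1 g2 : ℕ → ℕ) (x : ℕ) : ℕ :=
  if x = 0 then 2 * i + 1
  else if x = 2 * i + 1 then 0
  else if x < 2 * i + 1 then g1 (x - 1) + 1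
  else if x < 2 * (n + 1) then g2 (x - (2 * i + 2)) + (2 * i + 2)
  else x

lemma cf_zero (i n : ℕ) (g1 g2 : ℕ → ℕ) : cf i n g1 g2 0 = 2 * i + 1 := by
  simp [cf]

lemma cf_v (i n : ℕ) (g1 g2 : ℕ → ℕ) : cf i n g1 g2 (2 * i + 1) = 0 := by
  simp [cf]

lemma cf_A (i n : ℕ) (g1 g2 : ℕ → ℕ) {x : ℕ} (hx1 : 0 < x) (hx2 : x < 2 * i + 1) :
    cf i n g1 g2 x = g1 (x - 1) + 1 := by
  unfold cf
  rw [if_neg (by omega), if_neg (by omega), if_pos hx2]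

lemma cf_B (i n : ℕ) (g1 g2 : ℕ → ℕ) {x : ℕ} (hx1 : 2 * i + 1 < x) (hx2 : x < 2 * (n + 1)) :
    cf i n g1 g2 x = g2 (x - (2 * i + 2)) + (2 * i + 2) := by
  unfold cf
  rw [if_neg (by omega), if_neg (by omega), if_neg (by omega), if_pos hx2]

lemma cf_C (i n : ℕ) (g1 g2 : ℕ → ℕ) {x : ℕ} (hi : i ≤ n) (hx : 2 * (n + 1) ≤ x) :
    cf i n g1 g2 x = x := by
  unfold cf
  rw [if_neg (by omega), if_neg (by omega), if_neg (by omega), if_neg (by omega)]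

def combine {n : ℕ} (i : ℕ) (hi : i ≤ n) (D1 : NM i) (D2 : NM (n - i)) : NM (n + 1) where
  f := cf i n D1.f D2.f
  small x hx := by
    rcases Nat.eq_zero_or_pos x with rfl | hx0
    · rw [cf_zero]; omega
    by_cases hxv : x = 2 * i + 1
    · subst hxv; rw [cf_v]; omega
    by_cases hxA : x < 2 * i + 1
    · rw [cf_A _ _ _ _ hx0 hxA]
      have := D1.small (x - 1) (by omega)
      omega
    · rw [cf_B _ _ _ _ (by omega) hx]
      have := D2.small (x - (2 * i + 2)) (by omega)
      omega
  big x hx := cf_C _ _ _ _ hi hx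
  invol x := by
    rcases Nat.eq_zero_or_pos x with rfl | hx0
    · rw [cf_zero, cf_v]
    by_cases hxv : x = 2 * i + 1
    · subst hxv; rw [cf_v, cf_zero]
    by_cases hxA : x < 2 * i + 1
    · have h1 : D1.f (x - 1) < 2 * i := D1.small _ (by omega)
      rw [cf_A _ _ _ _ hx0 hxA, cf_A _ _ _ _ (by omega) (by omega), Nat.add_sub_cancel,
        D1.invol]
      omega
    by_cases hxC : 2 * (n + 1) ≤ x
    · rw [cf_C _ _ _ _ hi hxC, cf_C _ _ _ _ hi hxC]
    · have h1 : D2.f (x - (2 * i + 2)) < 2 * (n - i) := D2.small _ (by omega)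
      rw [cf_B _ _ _ _ (show 2 * i + 1 < x by omega) (show x < 2 * (n + 1) by omega),
        cf_B _ _ _ _ (by omega) (by omega), Nat.add_sub_cancel, D2.invol]
      omega
  nofix x hx := by
    rcases Nat.eq_zero_or_pos x with rfl | hx0
    · rw [cf_zero]; omega
    by_cases hxv : x = 2 * i + 1
    · subst hxv; rw [cf_v]; omega
    by_cases hxA : x < 2 * i + 1
    · rw [cf_A _ _ _ _ hx0 hxA]
      have := D1.nofix (x - 1) (by omega)
      omega
    · rw [cf_B _ _ _ _ (by omega) hx]
      have := D2.nofix (x - (2 * i + 2)) (by omega)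
      omega
  nc a b hab hbf hff := by
    by_cases haC : 2 * (n + 1) ≤ a
    · rw [cf_C _ _ _ _ hi haC] at hbf; omega
    push_neg at haC
    rcases Nat.eq_zero_or_pos a with rfl | ha0
    · rw [cf_zero] at hbf hff
      rw [cf_A _ _ _ _ (by omega) hbf] at hff
      have := D1.small (b - 1) (by omega)
      omega
    by_cases hav : a = 2 * i + 1
    · subst hav; rw [cf_v] at hbf; omega
    by_cases haA : a < 2 * i + 1
    · rw [cf_A _ _ _ _ ha0 haA] at hbf hff
      have h1 : D1.f (a - 1) < 2 * i := D1.small _ (by omega)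
      rw [cf_A _ _ _ _ (by omega) (by omega)] at hff
      exact D1.nc (a - 1) (b - 1) (by omega) (by omega) (by omega)
    · have haB : 2 * i + 1 < a := by omega
      rw [cf_B _ _ _ _ haB haC] at hbf hff
      have h1 : D2.f (a - (2 * i + 2)) < 2 * (n - i) := D2.small _ (by omega)
      rw [cf_B _ _ _ _ (by omega) (by omega)] at hff
      exact D2.nc (a - (2 * i + 2)) (b - (2 * i + 2)) (by omega) (by omega) (by omega)

lemma combine_f {n : ℕ} (i : ℕ) (hi : i ≤ n) (D1 : NM i) (D2 : NM (n - i)) (x : ℕ) :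
    (combine i hi D1 D2).f x = cf i n D1.f D2.f x := rfl

lemma combine_split {n : ℕ} (m : NM (n + 1)) :
    combine (iOf m) (iOf_le m) (d1 m) (d2 m) = m := by
  apply NM.ext'
  funext x
  have hv := f0_odd m
  have hi := iOf_le m
  rw [combine_f]
  rcases Nat.eq_zero_or_pos x with rfl | hx0
  · rw [cf_zero]; omega
  by_cases hxv : x = 2 * iOf m + 1
  · subst hxv
    rw [cf_v, ← hv]
    exact (m.invol 0).symm
  by_cases hxA : x < 2 * iOf m + 1
  · show cf _ _ (d1f m) _ x = m.f x
    rw [cf_A _ _ _ _ hx0 hxA, d1f_eq, if_pos (by omega), (by omega : x - 1 + 1 = x)]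
    have := closureA m (x := x) hx0 (by omega)
    omega
  by_cases hxC : 2 * (n + 1) ≤ x
  · rw [cf_C _ _ _ _ hi hxC, m.big x hxC]
  · push_neg at hxC
    show cf _ _ _ (d2f m) x = m.f x
    rw [cf_B _ _ _ _ (by omega) hxC, d2f_eq, if_pos (by omega),
      (by omega : x - (2 * iOf m + 2) + 2 * iOf m + 2 = x)]
    have := closureB m (x := x) (by omega) hxC
    omega

def g (n : ℕ) (x : Σ i : Fin (n + 1), NM ↑i × NM (n - ↑i)) : NM (n + 1) :=
  combine x.1.1 (Nat.lt_succ_iff.1 x.1.2) x.2.1 x.2.2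

lemma g_bijective (n : ℕ) : Function.Bijective (g n) := by
  constructor
  · rintro ⟨i, D1, D2⟩ ⟨i', D1', D2'⟩ h
    have hf : ∀ x, cf (↑i) n D1.f D2.f x = cf (↑i') n D1'.f D2'.f x :=
      fun x => congrArg (fun m => NM.f m x) h
    have hii : i = i' := by
      have h0 := hf 0
      rw [cf_zero, cf_zero] at h0
      exact Fin.ext (by omega)
    subst hii
    have hin : (i : ℕ) ≤ n := Nat.lt_succ_iff.1 i.isLt
    have hD1 : D1 = D1' := by
      apply NM.ext'
      funext x
      by_cases hx : x < 2 * (i : ℕ)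
      · have h3 := hf (x + 1)
        rw [cf_A _ _ _ _ (show 0 < x + 1 by omega) (show x + 1 < 2 * (i : ℕ) + 1 by omega),
          cf_A _ _ _ _ (show 0 < x + 1 by omega) (show x + 1 < 2 * (i : ℕ) + 1 by omega),
          Nat.add_sub_cancel] at h3
        omega
      · rw [D1.big x (by omega), D1'.big x (by omega)]
    have hD2 : D2 = D2' := by
      apply NM.ext'
      funext x
      by_cases hx : x < 2 * (n - (i : ℕ))
      · have h3 := hf (x + (2 * (i : ℕ) + 2))
        rw [cf_B _ _ _ _ (show 2 * (i : ℕ) + 1 < x + (2 * (i : ℕ) + 2) by omega)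
            (show x + (2 * (i : ℕ) + 2) < 2 * (n + 1) by omega),
          cf_B _ _ _ _ (show 2 * (i : ℕ) + 1 < x + (2 * (i : ℕ) + 2) by omega)
            (show x + (2 * (i : ℕ) + 2) < 2 * (n + 1) by omega),
          Nat.add_sub_cancel] at h3
        omega
      · rw [D2.big x (by omega), D2'.big x (by omega)]
    cases hD1; cases hD2; rfl
  · intro m
    exact ⟨⟨⟨iOf m, Nat.lt_succ_of_le (iOf_le m)⟩, d1 m, d2 m⟩, combine_split m⟩

noncomputable def splitEquiv (n : ℕ) :
    (Σ i : Fin (n + 1), NM ↑i × NM (n - ↑i)) ≃ NM (n + 1) :=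
  Equiv.ofBijective (g n) (g_bijective n)

end TL11

namespace TL11

/-! ### Exposed arcs of a combined diagram -/

lemma exposed_combine_zero {n i : ℕ} (hi : i ≤ n) (D1 : NM i) (D2 : NM (n - i)) :
    (combine i hi D1 D2).Exposed 0 := by
  unfold NM.Exposed
  rw [combine_f, cf_zero]
  exact ⟨by omega, fun c hc => by omega⟩

lemma exposed_combine_shift {n i : ℕ} (hi : i ≤ n) (D1 : NM i) (D2 : NM (n - i)) {b : ℕ}
    (hb : D2.Exposed b) : (combine i hi D1 D2).Exposed (b + (2 * i + 2)) := by
  have hb2 : b < 2 * (n - i) := D2.exposed_lt hb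
  have hb1 := hb.1
  unfold NM.Exposed
  constructor
  · rw [combine_f, cf_B _ _ _ _ (by omega) (by omega), Nat.add_sub_cancel]
    omega
  · rintro c ⟨hc1, hc2⟩
    rw [combine_f, combine_f, cf_B _ _ _ _ (show 2 * i + 1 < b + (2 * i + 2) by omega)
      (show b + (2 * i + 2) < 2 * (n + 1) by omega), Nat.add_sub_cancel] at hc2
    rcases Nat.eq_zero_or_pos c with rfl | h0
    · rw [cf_zero] at hc2; omega
    by_cases hv : c = 2 * i + 1
    · subst hv; rw [cf_v] at hc2; omega
    by_cases hA : c < 2 * i + 1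
    · rw [cf_A _ _ _ _ h0 hA] at hc2
      have := D1.small (c - 1) (by omega)
      omega
    · have hBlt : c < 2 * (n + 1) := by omega
      rw [cf_B _ _ _ _ (by omega) hBlt] at hc2
      exact hb.2 (c - (2 * i + 2)) ⟨by omega, by omega⟩

lemma exposed_combine_cases {n i : ℕ} (hi : i ≤ n) (D1 : NM i) (D2 : NM (n - i)) {a : ℕ}
    (ha : (combine i hi D1 D2).Exposed a) :
    a = 0 ∨ (2 * i + 2 ≤ a ∧ D2.Exposed (a - (2 * i + 2))) := by
  have ha1 := ha.1
  have halt : a < 2 * (n + 1) := (combine i hi D1 D2).exposed_lt ha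
  rw [combine_f] at ha1
  rcases Nat.eq_zero_or_pos a with rfl | h0
  · exact Or.inl rfl
  right
  by_cases hv : a = 2 * i + 1
  · subst hv; rw [cf_v] at ha1; omega
  by_cases hA : a < 2 * i + 1
  · exfalso
    apply ha.2 0
    refine ⟨by omega, ?_⟩
    rw [combine_f, combine_f, cf_zero, cf_A _ _ _ _ h0 hA]
    have := D1.small (a - 1) (by omega)
    omega
  · have hB : 2 * i + 1 < a := by omega
    rw [cf_B _ _ _ _ hB halt] at ha1
    refine ⟨by omega, ?_, ?_⟩
    · omega
    · rintro c ⟨hc1, hc2⟩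
      apply ha.2 (c + (2 * i + 2))
      refine ⟨by omega, ?_⟩
      rw [combine_f, combine_f, cf_B _ _ _ _ hB halt,
        cf_B _ _ _ _ (show 2 * i + 1 < c + (2 * i + 2) by omega)
          (show c + (2 * i + 2) < 2 * (n + 1) by omega), Nat.add_sub_cancel]
      omega

lemma ecount_combine {n i : ℕ} (hi : i ≤ n) (D1 : NM i) (D2 : NM (n - i)) :
    (combine i hi D1 D2).ecount = D2.ecount + 1 := by
  have e : {a : ℕ // (combine i hi D1 D2).Exposed a} ≃ Option {b : ℕ // D2.Exposed b} := {
    toFun := fun x =>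
      if h : (x : ℕ) = 0 then none
      else some ⟨x.1 - (2 * i + 2), by
        rcases exposed_combine_cases hi D1 D2 x.2 with h0 | ⟨_, h2⟩
        · exact absurd h0 h
        · exact h2⟩
    invFun := fun o => match o with
      | none => ⟨0, exposed_combine_zero hi D1 D2⟩
      | some b => ⟨b.1 + (2 * i + 2), exposed_combine_shift hi D1 D2 b.2⟩
    left_inv := fun x => by
      dsimp only
      by_cases h : (x : ℕ) = 0
      · rw [dif_pos h]
        exact Subtype.ext h.symm
      · rw [dif_neg h]
        apply Subtype.ext
        rcases exposed_combine_cases hi D1 D2 x.2 with h0 | ⟨hge, _⟩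
        · exact absurd h0 h
        · show x.1 - (2 * i + 2) + (2 * i + 2) = x.1
          omega
    right_inv := fun o => by
      rcases o with _ | b
      · dsimp only
        rw [dif_pos rfl]
      · dsimp only
        rw [dif_neg (show ¬((b : ℕ) + (2 * i + 2) = 0) by omega)]
        congr 1
        apply Subtype.ext
        show b.1 + (2 * i + 2) - (2 * i + 2) = b.1
        omega }
  rw [NM.ecount, Nat.card_congr e, Finite.card_option, NM.ecount]

/-! ### Counting -/

lemma nat_card_sigma {N : ℕ} (β : Fin N → Type) [∀ i, Finite (β i)] :
    Nat.card (Σ i, β i) = ∑ i, Nat.card (β i) := by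
  letI : ∀ i, Fintype (β i) := fun i => Fintype.ofFinite _
  rw [Nat.card_eq_fintype_card, Fintype.card_sigma]
  exact Finset.sum_congr rfl fun i _ => (Nat.card_eq_fintype_card).symm

instance : Unique (NM 0) where
  default :=
    { f := id
      small := fun x hx => absurd hx (by omega)
      big := fun x _ => rfl
      invol := fun x => rfl
      nofix := fun x hx => absurd hx (by omega)
      nc := fun a b h1 h2 h3 => by simp only [id] at h2; omega }
  uniq := fun m => NM.ext' (funext fun x => m.big x (Nat.zero_le x))

lemma card_NM (n : ℕ) : Nat.card (NM n) = catalan n := by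
  induction n using Nat.strong_induction_on with
  | _ n ih =>
    match n with
    | 0 => rw [catalan_zero]; exact Nat.card_unique
    | (n + 1) =>
      calc Nat.card (NM (n + 1))
          = Nat.card (Σ i : Fin (n + 1), NM ↑i × NM (n - ↑i)) :=
            (Nat.card_congr (splitEquiv n)).symm
        _ = ∑ i : Fin (n + 1), Nat.card (NM ↑i × NM (n - ↑i)) := nat_card_sigma _
        _ = ∑ i : Fin (n + 1), catalan ↑i * catalan (n - ↑i) := by
            refine Finset.sum_congr rfl fun i _ => ?_
            rw [Nat.card_prod, ih ↑i (by omega), ih (n - ↑i) (by omega)]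
        _ = catalan (n + 1) := (catalan_succ n).symm

noncomputable def E (n k : ℕ) : ℕ := Nat.card {m : NM n // m.ecount = k}

lemma ecount_NM0 (m : NM 0) : m.ecount = 0 := by
  have : IsEmpty {a : ℕ // m.Exposed a} :=
    ⟨fun x => by have := m.exposed_lt x.2; omega⟩
  exact Nat.card_of_isEmpty

lemma E_zero_zero : E 0 0 = 1 := by
  rw [E, Nat.card_congr (Equiv.subtypeUnivEquiv ecount_NM0)]
  exact Nat.card_unique

lemma exposed_zero {n : ℕ} (m : NM (n + 1)) : m.Exposed 0 :=
  ⟨by have := f0_pos m; omega, fun c hc => absurd hc.1 (Nat.not_lt_zero c)⟩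

lemma ecount_pos {n : ℕ} (m : NM (n + 1)) : m.ecount ≠ 0 := by
  have h1 : Nonempty {a : ℕ // m.Exposed a} := ⟨⟨0, exposed_zero m⟩⟩
  have h2 := Nat.card_pos (α := {a : ℕ // m.Exposed a})
  rw [NM.ecount]
  omega

lemma E_succ_zero (n : ℕ) : E (n + 1) 0 = 0 := by
  have : IsEmpty {m : NM (n + 1) // m.ecount = 0} := ⟨fun x => ecount_pos x.1 x.2⟩
  exact Nat.card_of_isEmpty

lemma exposed_sep {n : ℕ} (m : NM n) {a a' : ℕ} (h : m.Exposed a) (h' : m.Exposed a')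
    (hlt : a < a') : m.f a < a' := by
  by_contra hc
  push_neg at hc
  have h1 := h.1
  have h1' := h'.1
  have hne : a' ≠ m.f a := by
    intro he
    have h2 := m.invol a
    rw [he] at h1'
    omega
  have hcc : a' < m.f a := by omega
  rcases Nat.lt_trichotomy (m.f a) (m.f a') with ht | ht | ht
  · exact m.nc a a' hlt hcc ht
  · have h3 := congrArg m.f ht
    rw [m.invol, m.invol] at h3
    omega
  · exact h'.2 a ⟨hlt, ht⟩

lemma ecount_le {n : ℕ} (m : NM n) : m.ecount ≤ n := by
  have key : ∀ x y : {a : ℕ // m.Exposed a}, x.1 < y.1 → x.1 + 2 ≤ y.1 := by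
    intro x y hxy
    have h1 := x.2.1
    have := exposed_sep m x.2 y.2 hxy
    omega
  have hle : Nat.card {a : ℕ // m.Exposed a} ≤ Nat.card (Fin n) := by
    apply Nat.card_le_card_of_injective
      (fun x : {a : ℕ // m.Exposed a} =>
        (⟨x.1 / 2, by have := m.exposed_lt x.2; omega⟩ : Fin n))
    intro x y hxy
    have hv : x.1 / 2 = y.1 / 2 := congrArg Fin.val hxy
    apply Subtype.ext
    rcases Nat.lt_trichotomy x.1 y.1 with h | h | h
    · have := key x y h; omega
    · exact h
    · have := key y x h; omega
  have h2 : Nat.card (Fin n) = n := Nat.card_eq_fintype_card.trans (Fintype.card_fin n)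
  rw [NM.ecount]
  omega

lemma E_gt {n k : ℕ} (h : n < k) : E n k = 0 := by
  have : IsEmpty {m : NM n // m.ecount = k} :=
    ⟨fun x => by have h1 := ecount_le x.1; have h2 := x.2; omega⟩
  exact Nat.card_of_isEmpty

lemma ecount_splitEquiv (n : ℕ) (x : Σ i : Fin (n + 1), NM ↑i × NM (n - ↑i)) :
    (splitEquiv n x).ecount = x.2.2.ecount + 1 :=
  ecount_combine (Nat.lt_succ_iff.1 x.1.2) x.2.1 x.2.2

lemma E_rec (n k : ℕ) : E (n + 1) (k + 1) = ∑ i : Fin (n + 1), catalan ↑i * E (n - ↑i) k := by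
  have e2 : (Σ i : Fin (n + 1), NM ↑i × {m₂ : NM (n - ↑i) // m₂.ecount = k}) ≃
      {x : Σ i : Fin (n + 1), NM ↑i × NM (n - ↑i) // x.2.2.ecount = k} := {
    toFun := fun y => ⟨⟨y.1, y.2.1, y.2.2.1⟩, y.2.2.2⟩
    invFun := fun x => ⟨x.1.1, x.1.2.1, ⟨x.1.2.2, x.2⟩⟩
    left_inv := fun y => rfl
    right_inv := fun x => rfl }
  have e1 : {x : Σ i : Fin (n + 1), NM ↑i × NM (n - ↑i) // x.2.2.ecount = k} ≃
      {m : NM (n + 1) // m.ecount = k + 1} :=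
    Equiv.subtypeEquiv (splitEquiv n) (fun x => by rw [ecount_splitEquiv n x]; omega)
  calc E (n + 1) (k + 1)
      = Nat.card (Σ i : Fin (n + 1), NM ↑i × {m₂ : NM (n - ↑i) // m₂.ecount = k}) :=
        (Nat.card_congr (e2.trans e1)).symm
    _ = ∑ i : Fin (n + 1), Nat.card (NM ↑i × {m₂ : NM (n - ↑i) // m₂.ecount = k}) :=
        nat_card_sigma _
    _ = ∑ i : Fin (n + 1), catalan ↑i * E (n - ↑i) k := by
        refine Finset.sum_congr rfl fun i _ => ?_
        rw [Nat.card_prod, card_NM, E]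

/-! ### The Catalan convolution sums -/

def S (k m : ℕ) : ℕ := ∑ t ∈ Finset.Nat.antidiagonalTuple k m, ∏ j, catalan (t j)

lemma S_antidiagonal (k m : ℕ) :
    S (k + 1) m = ∑ p ∈ Finset.HasAntidiagonal.antidiagonal m, catalan p.1 * S k p.2 := by
  have hS : ∀ p : ℕ × ℕ, catalan p.1 * S k p.2 =
      ∑ t ∈ Finset.Nat.antidiagonalTuple k p.2, catalan p.1 * ∏ j, catalan (t j) :=
    fun p => by rw [S, Finset.mul_sum]
  simp_rw [hS]
  rw [Finset.sum_sigma']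
  rw [S]
  refine Finset.sum_nbij'
    (fun x : Fin (k + 1) → ℕ => (⟨(x 0, ∑ j : Fin k, x j.succ), Fin.tail x⟩ :
      Σ _p : ℕ × ℕ, Fin k → ℕ))
    (fun y : Σ _p : ℕ × ℕ, Fin k → ℕ => Fin.cons y.1.1 y.2) ?_ ?_ ?_ ?_ ?_
  · intro x hx
    rw [Finset.Nat.mem_antidiagonalTuple] at hx
    rw [Finset.mem_sigma, Finset.HasAntidiagonal.mem_antidiagonal, Finset.Nat.mem_antidiagonalTuple]
    constructor
    · rw [← hx, Fin.sum_univ_succ]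
    · rfl
  · intro y hy
    rw [Finset.mem_sigma, Finset.HasAntidiagonal.mem_antidiagonal,
      Finset.Nat.mem_antidiagonalTuple] at hy
    rw [Finset.Nat.mem_antidiagonalTuple, Fin.sum_cons, hy.2, hy.1]
  · intro x _
    exact Fin.cons_self_tail x
  · rintro ⟨⟨a, b⟩, t⟩ hy
    rw [Finset.mem_sigma, Finset.HasAntidiagonal.mem_antidiagonal,
      Finset.Nat.mem_antidiagonalTuple] at hy
    dsimp only at hy ⊢
    simp only [Fin.cons_zero, Fin.cons_succ, Fin.tail_cons]
    rw [hy.2]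
  · intro x _
    dsimp only
    rw [Fin.prod_univ_succ]
    rfl

lemma S_succ (k m : ℕ) :
    S (k + 1) m = ∑ i ∈ Finset.range (m + 1), catalan i * S k (m - i) := by
  rw [S_antidiagonal, Finset.Nat.sum_antidiagonal_eq_sum_range_succ_mk]

lemma S_one (m : ℕ) : S 1 m = catalan m := by
  rw [S, Finset.Nat.antidiagonalTuple_one, Finset.sum_singleton]
  simp

/-! ### Main counting lemma -/

lemma main (k : ℕ) : ∀ n, k + 1 ≤ n → E n (k + 1) = S (k + 1) (n - (k + 1)) := by
  induction k with
  | zero =>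
    intro n hn
    obtain ⟨m, rfl⟩ : ∃ m, n = m + 1 := ⟨n - 1, by omega⟩
    rw [E_rec m 0, show m + 1 - 1 = m by omega, S_one]
    have hz : ∀ i : Fin (m + 1), i ≠ ⟨m, by omega⟩ → catalan ↑i * E (m - ↑i) 0 = 0 := by
      intro i hi
      have hiv : (i : ℕ) < m := by
        have h1 := i.isLt
        rcases Nat.lt_or_ge (i : ℕ) m with h | h
        · exact h
        · exfalso
          apply hi
          apply Fin.ext
          have hh : (i : ℕ) = m := by omega
          rw [hh]
      obtain ⟨j, hj⟩ : ∃ j, m - (i : ℕ) = j + 1 := ⟨m - (i : ℕ) - 1, by omega⟩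
      rw [hj, E_succ_zero, mul_zero]
    rw [Fintype.sum_eq_single _ hz]
    show catalan m * E (m - m) 0 = catalan m
    rw [Nat.sub_self, E_zero_zero, mul_one]
  | succ k ih =>
    intro n hn
    obtain ⟨m, rfl⟩ : ∃ m, n = m + 1 := ⟨n - 1, by omega⟩
    have hm : k + 1 ≤ m := by omega
    rw [E_rec m (k + 1), show m + 1 - (k + 1 + 1) = m - (k + 1) by omega, S_succ,
      Fin.sum_univ_eq_sum_range (fun i => catalan i * E (m - i) (k + 1)) (m + 1)]
    have hsub : Finset.range (m - (k + 1) + 1) ⊆ Finset.range (m + 1) :=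
      Finset.range_subset_range.2 (by omega)
    have hzero : ∀ x ∈ Finset.range (m + 1), x ∉ Finset.range (m - (k + 1) + 1) →
        catalan x * E (m - x) (k + 1) = 0 := by
      intro x hx1 hx2
      rw [Finset.mem_range] at hx1 hx2
      rw [E_gt (by omega), mul_zero]
    rw [← Finset.sum_subset hsub hzero]
    refine Finset.sum_congr rfl fun i hi => ?_
    rw [Finset.mem_range] at hi
    rw [ih (m - i) (by omega), show m - i - (k + 1) = m - (k + 1) - i by omega]

end TL11

/-- for `k ∈ [1, n]`, the number of Temperley–Lieb diagrams on
`n` points with exactly `k` arcs exposed to the left side equals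
`Σ_{i₁+⋯+i_k = n-k} C_{i₁} ⋯ C_{i_k}`. -/
theorem stmt11 (n k : ℕ) (h1 : 1 ≤ k) (h2 : k ≤ n) :
    Nat.card {D : TLDiagram n // exposedCount D = k} =
      ∑ t ∈ Finset.Nat.antidiagonalTuple k (n - k), ∏ j, catalan (t j) := by
  obtain ⟨k', rfl⟩ : ∃ k', k = k' + 1 := ⟨k - 1, by omega⟩
  have hcard : Nat.card {D : TLDiagram n // exposedCount D = k' + 1} = TL11.E n (k' + 1) := by
    apply Nat.card_congr
    exact Equiv.subtypeEquiv (TL11.equivNM n) (fun D => by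
      rw [show (TL11.equivNM n) D = TL11.toNM D from rfl, TL11.ecount_toNM])
  rw [hcard, TL11.main k' n h2]
  rfl
end

section
/- χ_1^{(n)} = C_{n-1}, χ_{n-1}^{(n)} = n-1, χ_n^{(n)} = 1, and for k ∈ [2, n-1], χ_k^{(n)} = χ_{k-1}^{(n-1)} + χ_{k+1}^{(n)}. -/
open Finset

private noncomputable def catC : PowerSeries ℕ := PowerSeries.mk catalan

private lemma sum_adT_succ {M : Type*} [AddCommMonoid M] (k n : ℕ)
    (f : (Fin (k + 1) → ℕ) → M) :
    ∑ t ∈ Finset.Nat.antidiagonalTuple (k + 1) n, f t =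
      ∑ p ∈ Finset.HasAntidiagonal.antidiagonal n,
        ∑ x ∈ Finset.Nat.antidiagonalTuple k p.2, f (Fin.cons p.1 x) := by
  rw [Finset.sum_sigma']
  apply Finset.sum_nbij'
    (i := fun t => (⟨(t 0, ∑ i, Fin.tail t i), Fin.tail t⟩ :
      Σ _p : ℕ × ℕ, Fin k → ℕ))
    (j := fun q => Fin.cons q.1.1 q.2)
  · intro t ht
    rw [Finset.Nat.mem_antidiagonalTuple] at ht
    rw [Finset.mem_sigma, Finset.HasAntidiagonal.mem_antidiagonal, Finset.Nat.mem_antidiagonalTuple]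
    refine ⟨?_, rfl⟩
    rw [← ht, Fin.sum_univ_succ]
    rfl
  · intro q hq
    rw [Finset.mem_sigma, Finset.HasAntidiagonal.mem_antidiagonal,
      Finset.Nat.mem_antidiagonalTuple] at hq
    rw [Finset.Nat.mem_antidiagonalTuple, Fin.sum_cons, hq.2, hq.1]
  · intro t _; exact Fin.cons_self_tail t
  · intro q hq
    rw [Finset.mem_sigma, Finset.HasAntidiagonal.mem_antidiagonal,
      Finset.Nat.mem_antidiagonalTuple] at hq
    obtain ⟨⟨a, b⟩, x⟩ := q
    simp only [Fin.cons_zero, Fin.tail_cons]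
    obtain ⟨h1, h2⟩ := hq
    simp only at h1 h2
    subst h2
    rfl
  · intro t _; exact congrArg f (Fin.cons_self_tail t).symm

private lemma chi_eq_coeff (k m : ℕ) :
    ∑ t ∈ Finset.Nat.antidiagonalTuple k m, ∏ j, catalan (t j) =
      PowerSeries.coeff m (catC ^ k) := by
  induction k generalizing m with
  | zero =>
    cases m with
    | zero => simp
    | succ m => simp [PowerSeries.coeff_one]
  | succ k ih =>
    rw [sum_adT_succ, pow_succ, mul_comm, PowerSeries.coeff_mul]
    refine Finset.sum_congr rfl fun p _ => ?_
    rw [← ih p.2, Finset.mul_sum]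
    refine Finset.sum_congr rfl fun x _ => ?_
    rw [Fin.prod_univ_succ]
    simp [catC, PowerSeries.coeff_mk, mul_comm]

private lemma catC_eq : catC = 1 + PowerSeries.X * catC ^ 2 := by
  ext m
  cases m with
  | zero => simp [catC, PowerSeries.coeff_zero_eq_constantCoeff]
  | succ m =>
    rw [map_add, PowerSeries.coeff_one, PowerSeries.coeff_succ_X_mul, catC, PowerSeries.coeff_mk,
      catalan_succ', sq, PowerSeries.coeff_mul]
    simp [PowerSeries.coeff_mk]

private lemma coeff_one_catC_pow (k : ℕ) : PowerSeries.coeff 1 (catC ^ k) = k := by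
  induction k with
  | zero => simp [PowerSeries.coeff_one]
  | succ k ih =>
    rw [pow_succ, PowerSeries.coeff_one_mul, ih]
    have h0 : PowerSeries.constantCoeff catC = 1 := by simp [catC]
    have h1 : PowerSeries.coeff 1 catC = 1 := by simp [catC]
    simp [h0, h1, map_pow]


private lemma catC_pow_succ (j : ℕ) :
    catC ^ (j + 1) = catC ^ j + PowerSeries.X * catC ^ (j + 2) := by
  have h : catC ^ (j + 1) = catC ^ j * (1 + PowerSeries.X * catC ^ 2) := by
    rw [← catC_eq, pow_succ]
  rw [h]; ring

/-- `χ_1^{(n)} = C_{n-1}`, `χ_{n-1}^{(n)} = n-1`,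
`χ_n^{(n)} = 1`, and `χ_k^{(n)} = χ_{k-1}^{(n-1)} + χ_{k+1}^{(n)}` for
`k ∈ [2, n-1]`. -/
theorem stmt12 (n : ℕ) (hn : 1 ≤ n) :
    chi n 1 = catalan (n - 1) ∧ chi n (n - 1) = n - 1 ∧ chi n n = 1 ∧
      ∀ k, 2 ≤ k → k ≤ n - 1 → chi n k = chi (n - 1) (k - 1) + chi n (k + 1) := by
  have key : ∀ a b : ℕ, chi a b = PowerSeries.coeff (a - b) (catC ^ b) :=
    fun a b => chi_eq_coeff b (a - b)
  refine ⟨?_, ?_, ?_, ?_⟩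
  · rw [key, pow_one, catC, PowerSeries.coeff_mk]
  · rcases Nat.lt_or_ge n 2 with h2 | h2
    · interval_cases n
      · rw [key]
        simp [PowerSeries.coeff_one]
    · have e : n - (n - 1) = 1 := by omega
      rw [key, e, coeff_one_catC_pow]
  · rw [key, Nat.sub_self, PowerSeries.coeff_zero_eq_constantCoeff, map_pow]
    simp [catC]
  · intro k hk2 hk1
    obtain ⟨j, rfl⟩ : ∃ j, k = j + 2 := ⟨k - 2, by omega⟩
    have hp : catC ^ (j + 2) = catC ^ (j + 1) + PowerSeries.X * catC ^ (j + 3) :=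
      catC_pow_succ (j + 1)
    have e1 : n - (j + 2) = (n - (j + 3)) + 1 := by omega
    have e2 : (n - 1) - (j + 2 - 1) = n - (j + 2) := by omega
    have e3 : j + 2 - 1 = j + 1 := by omega
    have e4 : j + 2 + 1 = j + 3 := by omega
    rw [key n (j + 2), key (n - 1) (j + 2 - 1), key n (j + 2 + 1), e2, e3, e4, hp, map_add]
    congr 1
    rw [e1, PowerSeries.coeff_succ_X_mul]
end

section
/- For n ≥ 3 and k ∈ [1, n-1], χ_k^{(n)} = θ_k^{(n)}: the number of Temperley–Lieb diagrams on n points with exactly k left-exposed arcs equals the number of positive indexing matrices whose (1,1)-entry is k. -/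
open Finset

namespace Stmt13Aux

/-- `c k m` = k-fold Catalan convolution at `m`. -/
def c (k m : ℕ) : ℕ := ∑ t ∈ Finset.Nat.antidiagonalTuple k m, ∏ j, catalan (t j)

lemma c_zero_zero : c 0 0 = 1 := by simp [c]

lemma c_zero_succ (m : ℕ) : c 0 (m + 1) = 0 := by simp [c]

lemma c_zero_right (k : ℕ) : c k 0 = 1 := by
  simp [c, Finset.Nat.antidiagonalTuple_zero_right]

lemma c_succ (k m : ℕ) : c (k + 1) m = ∑ p ∈ Finset.HasAntidiagonal.antidiagonal m, catalan p.1 * c k p.2 := by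
  unfold c
  simp_rw [Finset.mul_sum]
  rw [Finset.sum_sigma' (Finset.HasAntidiagonal.antidiagonal m) (fun p => Finset.Nat.antidiagonalTuple k p.2)]
  refine Finset.sum_nbij' (i := fun (t : Fin (k+1) → ℕ) => (⟨(t 0, ∑ i : Fin k, t i.succ), Fin.tail t⟩ : (p : ℕ × ℕ) × (Fin k → ℕ)))
    (j := fun p => Fin.cons p.1.1 p.2) ?_ ?_ ?_ ?_ ?_
  · intro t ht
    rw [Finset.Nat.mem_antidiagonalTuple] at ht
    simp only [Finset.mem_sigma, Finset.HasAntidiagonal.mem_antidiagonal, Finset.Nat.mem_antidiagonalTuple]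
    constructor
    · rw [← ht, Fin.sum_univ_succ]
    · rfl
  · intro p hp
    simp only [Finset.mem_sigma, Finset.HasAntidiagonal.mem_antidiagonal,
      Finset.Nat.mem_antidiagonalTuple] at hp ⊢
    rw [Fin.sum_univ_succ]
    simp only [Fin.cons_zero, Fin.cons_succ]
    rw [hp.2, hp.1]
  · intro t _; exact Fin.cons_self_tail t
  · intro p hp
    simp only [Finset.mem_sigma, Finset.HasAntidiagonal.mem_antidiagonal,
      Finset.Nat.mem_antidiagonalTuple] at hp
    obtain ⟨⟨p1, p2⟩, s⟩ := p
    simp only at hp ⊢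
    simp only [Fin.cons_zero, Fin.cons_succ, Fin.tail_cons, Sigma.mk.inj_iff, heq_eq_eq,
      Prod.mk.injEq, and_true, true_and]
    exact hp.2
  · intro t _
    rw [Fin.prod_univ_succ]
    rfl

lemma c_one (m : ℕ) : c 1 m = catalan m := by
  rw [c_succ]
  rw [Finset.sum_eq_single (m, 0)]
  · simp [c_zero_zero]
  · intro p hp hne
    obtain ⟨p1, p2⟩ := p
    rw [Finset.HasAntidiagonal.mem_antidiagonal] at hp
    simp only at hp ⊢
    cases p2 with
    | zero => exact absurd (by simp only [Prod.mk.injEq, and_true]; omega) hne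
    | succ m' => rw [c_zero_succ, mul_zero]
  · intro h
    exact absurd (by simp [Finset.HasAntidiagonal.mem_antidiagonal]) h

lemma sum_triple (f : ℕ → ℕ → ℕ → ℕ) (m : ℕ) :
    ∑ q ∈ Finset.HasAntidiagonal.antidiagonal m, ∑ r ∈ Finset.HasAntidiagonal.antidiagonal q.1, f r.1 r.2 q.2
      = ∑ p ∈ Finset.HasAntidiagonal.antidiagonal m, ∑ s ∈ Finset.HasAntidiagonal.antidiagonal p.2, f p.1 s.1 s.2 := by
  rw [Finset.sum_sigma' (Finset.HasAntidiagonal.antidiagonal m) (fun q => Finset.HasAntidiagonal.antidiagonal q.1)]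
  rw [Finset.sum_sigma' (Finset.HasAntidiagonal.antidiagonal m) (fun p => Finset.HasAntidiagonal.antidiagonal p.2)]
  refine Finset.sum_nbij'
    (i := fun (x : (q : ℕ × ℕ) × ℕ × ℕ) =>
      (⟨(x.2.1, x.2.2 + x.1.2), (x.2.2, x.1.2)⟩ : (q : ℕ × ℕ) × ℕ × ℕ))
    (j := fun (x : (q : ℕ × ℕ) × ℕ × ℕ) =>
      (⟨(x.1.1 + x.2.1, x.2.2), (x.1.1, x.2.1)⟩ : (q : ℕ × ℕ) × ℕ × ℕ)) ?_ ?_ ?_ ?_ ?_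
  · rintro ⟨⟨q1, q2⟩, r1, r2⟩ h
    simp only [Finset.mem_sigma, Finset.HasAntidiagonal.mem_antidiagonal, and_true, true_and] at h ⊢
    omega
  · rintro ⟨⟨p1, p2⟩, s1, s2⟩ h
    simp only [Finset.mem_sigma, Finset.HasAntidiagonal.mem_antidiagonal, and_true, true_and] at h ⊢
    omega
  · rintro ⟨⟨q1, q2⟩, r1, r2⟩ h
    simp only [Finset.mem_sigma, Finset.HasAntidiagonal.mem_antidiagonal] at h
    simp only [Sigma.mk.inj_iff, heq_eq_eq, Prod.mk.injEq, and_true, true_and]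
    omega
  · rintro ⟨⟨p1, p2⟩, s1, s2⟩ h
    simp only [Finset.mem_sigma, Finset.HasAntidiagonal.mem_antidiagonal] at h
    simp only [Sigma.mk.inj_iff, heq_eq_eq, Prod.mk.injEq, and_true, true_and]
    omega
  · rintro ⟨q, r⟩ _
    rfl

lemma c_pascal (k m : ℕ) : c (k + 1) (m + 1) = c k (m + 1) + c (k + 2) m := by
  rw [c_succ, Finset.Nat.antidiagonal_succ, Finset.sum_cons, catalan_zero, one_mul,
    Finset.sum_map]
  congr 1
  simp only [Function.Embedding.coe_prodMap, Function.Embedding.coeFn_mk,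
    Function.Embedding.refl_apply, Prod.map_fst, Prod.map_snd]
  simp_rw [catalan_succ', Finset.sum_mul]
  rw [c_succ (k + 1)]
  simp_rw [c_succ k, Finset.mul_sum]
  simp_rw [mul_assoc]
  exact sum_triple (fun u v w => catalan u * (catalan v * c k w)) m

lemma c_telescope (k m : ℕ) (hk : 1 ≤ k) :
    c k (m + 1) = ∑ j ∈ Finset.Icc 2 (k + 1), c j m := by
  induction k with
  | zero => omega
  | succ k ih =>
    rcases Nat.eq_zero_or_pos k with rfl | hk'
    · have h01 := c_pascal 0 m
      rw [c_zero_succ, zero_add] at h01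
      rw [h01]
      norm_num
    · rw [c_pascal, ih hk']
      have hins : Finset.Icc 2 (k + 1 + 1) = insert (k + 2) (Finset.Icc 2 (k + 1)) := by
        ext j; simp [Finset.mem_Icc, Finset.mem_insert]; omega
      rw [hins, Finset.sum_insert (by simp [Finset.mem_Icc])]
      ring

/-- The column-peeling count of indexing matrices. -/

def Tfun (N x y : ℕ) : ℕ :=
  1 + ∑ a ∈ (Finset.Ioc x N).attach, ∑ b ∈ Finset.Ioc y a.1, Tfun N a.1 b
termination_by N - x
decreasing_by
  have := a.2
  rw [Finset.mem_Ioc] at this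
  omega

lemma Tfun_eq (N x y : ℕ) :
    Tfun N x y = 1 + ∑ a ∈ Finset.Ioc x N, ∑ b ∈ Finset.Ioc y a, Tfun N a b := by
  rw [Tfun]
  exact congrArg (1 + ·) (Finset.sum_attach _ fun a => ∑ b ∈ Finset.Ioc y a, Tfun N a b)

lemma c_sum_Ioc (N x y : ℕ) (hyx : y ≤ x) (hxN : x ≤ N) :
    c (x - y + 2) (N - x) = 1 + ∑ a ∈ Finset.Ioc x N, c (a - y) (N - a + 1) := by
  rcases eq_or_lt_of_le hxN with rfl | hlt
  · rw [Nat.sub_self, c_zero_right, Finset.Ioc_self, Finset.sum_empty]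
    omega
  · have hsplit : Finset.Ioc x N = insert (x + 1) (Finset.Ioc (x + 1) N) := by
      ext j; simp only [Finset.mem_Ioc, Finset.mem_insert]; omega
    rw [hsplit, Finset.sum_insert (by simp [Finset.mem_Ioc])]
    have IH := c_sum_Ioc N (x + 1) y (by omega) hlt
    have e1 : x + 1 - y = x - y + 1 := by omega
    have e2 : N - (x + 1) + 1 = N - x := by omega
    have e3 : N - x = (N - (x + 1)) + 1 := by omega
    rw [e1, e2]
    rw [e3, show x - y + 2 = (x - y + 1) + 1 from rfl, c_pascal]
    rw [e1] at IH
    omega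
termination_by N - x

lemma Tfun_eq_c (N x y : ℕ) (hyx : y ≤ x) (hxN : x ≤ N) :
    Tfun N x y = c (x - y + 2) (N - x) := by
  rw [Tfun_eq, c_sum_Ioc N x y hyx hxN]
  congr 1
  refine Finset.sum_congr rfl ?_
  intro a ha
  rw [Finset.mem_Ioc] at ha
  have h1 : ∑ b ∈ Finset.Ioc y a, Tfun N a b = ∑ b ∈ Finset.Ioc y a, c (a - b + 2) (N - a) :=
    Finset.sum_congr rfl fun b hb => by
      rw [Finset.mem_Ioc] at hb
      exact Tfun_eq_c N a b hb.2 ha.2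
  rw [h1, c_telescope (a - y) (N - a) (by omega)]
  refine Finset.sum_nbij' (i := fun b => a - b + 2) (j := fun j => a + 2 - j) ?_ ?_ ?_ ?_ ?_
  · intro b hb; rw [Finset.mem_Ioc] at hb; rw [Finset.mem_Icc]; omega
  · intro j hj; rw [Finset.mem_Icc] at hj; rw [Finset.mem_Ioc]; omega
  · intro b hb; rw [Finset.mem_Ioc] at hb; omega
  · intro j hj; rw [Finset.mem_Icc] at hj; omega
  · intro b hb; rfl
termination_by N - x
decreasing_by
  rw [Finset.mem_Ioc] at ha
  omega


end Stmt13Aux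


namespace Stmt13Aux

def Good (N : ℕ) : ℕ → ℕ → List (ℕ × ℕ) → Prop
  | _, _, [] => True
  | x, y, p :: t => x < p.1 ∧ p.1 ≤ N ∧ y < p.2 ∧ p.2 ≤ p.1 ∧ Good N p.1 p.2 t

def FS (N : ℕ) : ℕ → ℕ → ℕ → Finset (List (ℕ × ℕ))
  | 0, _, _ => {[]}
  | fuel + 1, x, y =>
    insert [] ((((Finset.Ioc x N) ×ˢ (Finset.Ioc y N)).filter fun p => p.2 ≤ p.1).biUnion
      fun p => (FS N fuel p.1 p.2).image (p :: ·))

lemma mem_FS (N : ℕ) : ∀ (fuel x y : ℕ) (l : List (ℕ × ℕ)), N - x ≤ fuel →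
    (l ∈ FS N fuel x y ↔ Good N x y l) := by
  intro fuel
  induction fuel with
  | zero =>
    intro x y l h
    match l with
    | [] => simp [FS, Good]
    | p :: t =>
      simp only [FS, Finset.mem_singleton, Good]
      constructor
      · intro h'; exact absurd h' (by simp)
      · rintro ⟨h1, h2, _⟩; omega
  | succ fuel ih =>
    intro x y l h
    match l with
    | [] => simp [FS, Good]
    | p :: t =>
      simp only [FS, Finset.mem_insert, Finset.mem_biUnion, Finset.mem_filter,
        Finset.mem_product, Finset.mem_image, Finset.mem_Ioc, Good]
      constructor
      · rintro (h' | ⟨q, ⟨⟨⟨hx, hN⟩, hy, hN2⟩, hba⟩, t', ht', heq⟩)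
        · exact absurd h' (by simp)
        · injection heq with e1 e2
          subst e1; subst e2
          exact ⟨hx, hN, hy, hba, (ih q.1 q.2 _ (by omega)).mp ht'⟩
      · rintro ⟨h1, h2, h3, h4, h5⟩
        exact Or.inr ⟨p, ⟨⟨⟨h1, h2⟩, h3, le_trans h4 h2⟩, h4⟩, t,
          (ih p.1 p.2 t (by omega)).mpr h5, rfl⟩

lemma card_FS (N : ℕ) : ∀ fuel x y, N - x ≤ fuel → (FS N fuel x y).card = Tfun N x y := by
  intro fuel
  induction fuel with
  | zero =>
    intro x y h
    rw [Tfun_eq, Finset.Ioc_eq_empty (by omega), Finset.sum_empty]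
    simp [FS]
  | succ fuel ih =>
    intro x y h
    have hnotmem : ([] : List (ℕ × ℕ)) ∉
        (((Finset.Ioc x N) ×ˢ (Finset.Ioc y N)).filter fun p => p.2 ≤ p.1).biUnion
          (fun p => (FS N fuel p.1 p.2).image (p :: ·)) := by
      simp [Finset.mem_biUnion, Finset.mem_image]
    have hdisj : ∀ p ∈ ((Finset.Ioc x N) ×ˢ (Finset.Ioc y N)).filter fun p => p.2 ≤ p.1,
        ∀ q ∈ ((Finset.Ioc x N) ×ˢ (Finset.Ioc y N)).filter fun p => p.2 ≤ p.1, p ≠ q →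
        Disjoint ((FS N fuel p.1 p.2).image (p :: ·)) ((FS N fuel q.1 q.2).image (q :: ·)) := by
      intro p _ q _ hpq
      rw [Finset.disjoint_left]
      intro l hl1 hl2
      rw [Finset.mem_image] at hl1 hl2
      obtain ⟨t1, _, rfl⟩ := hl1
      obtain ⟨t2, _, heq⟩ := hl2
      injection heq with e1 _
      exact hpq e1.symm
    rw [show FS N (fuel + 1) x y =
        insert [] ((((Finset.Ioc x N) ×ˢ (Finset.Ioc y N)).filter fun p => p.2 ≤ p.1).biUnion
          fun p => (FS N fuel p.1 p.2).image (p :: ·)) from rfl,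
      Finset.card_insert_of_notMem hnotmem, Finset.card_biUnion hdisj]
    have hsum : ∀ p ∈ ((Finset.Ioc x N) ×ˢ (Finset.Ioc y N)).filter fun p => p.2 ≤ p.1,
        ((FS N fuel p.1 p.2).image (p :: ·)).card = Tfun N p.1 p.2 := by
      intro p hp
      simp only [Finset.mem_filter, Finset.mem_product, Finset.mem_Ioc] at hp
      rw [Finset.card_image_of_injective _ (List.cons_injective)]
      exact ih p.1 p.2 (by omega)
    rw [Finset.sum_congr rfl hsum, Tfun_eq, add_comm 1]
    congr 1
    rw [Finset.sum_filter, Finset.sum_product]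
    refine Finset.sum_congr rfl fun a ha => ?_
    rw [Finset.mem_Ioc] at ha
    rw [← Finset.sum_filter]
    congr 1
    ext b
    simp only [Finset.mem_filter, Finset.mem_Ioc]
    omega

lemma good_entry_bounds (N : ℕ) : ∀ (l : List (ℕ × ℕ)) (x y : ℕ), Good N x y l →
    ∀ p ∈ l, x < p.1 ∧ p.1 ≤ N ∧ y < p.2 ∧ p.2 ≤ p.1 := by
  intro l
  induction l with
  | nil => intro x y _ p hp; cases hp
  | cons q t ih =>
    intro x y hg p hp
    obtain ⟨h1, h2, h3, h4, h5⟩ := hg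
    rw [List.mem_cons] at hp
    rcases hp with rfl | hp
    · exact ⟨h1, h2, h3, h4⟩
    · have := ih q.1 q.2 h5 p hp
      exact ⟨by omega, this.2.1, by omega, this.2.2.2⟩

lemma good_length (N : ℕ) : ∀ (l : List (ℕ × ℕ)) (x y : ℕ), Good N x y l →
    l.length ≤ N - x := by
  intro l
  induction l with
  | nil => intro x y _; simp
  | cons q t ih =>
    intro x y hg
    obtain ⟨h1, h2, _, _, h5⟩ := hg
    have := ih q.1 q.2 h5
    simp only [List.length_cons]
    omega

lemma good_pairwise (N : ℕ) : ∀ (l : List (ℕ × ℕ)) (x y : ℕ), Good N x y l →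
    l.Pairwise (fun p q => p.1 < q.1 ∧ p.2 < q.2) := by
  intro l
  induction l with
  | nil => intro x y _; exact List.Pairwise.nil
  | cons q t ih =>
    intro x y hg
    obtain ⟨_, _, _, _, h5⟩ := hg
    rw [List.pairwise_cons]
    exact ⟨fun p hp => ⟨(good_entry_bounds N t q.1 q.2 h5 p hp).1,
      (good_entry_bounds N t q.1 q.2 h5 p hp).2.2.1⟩, ih q.1 q.2 h5⟩

lemma pairwise_good (N : ℕ) : ∀ (l : List (ℕ × ℕ)) (x y : ℕ),
    l.Pairwise (fun p q => p.1 < q.1 ∧ p.2 < q.2) →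
    (∀ p ∈ l, p.1 ≤ N ∧ p.2 ≤ p.1) →
    (∀ p ∈ l.head?, x < p.1 ∧ y < p.2) → Good N x y l := by
  intro l
  induction l with
  | nil => intro x y _ _ _; trivial
  | cons q t ih =>
    intro x y hpw hb hh
    have hq := hh q (by simp)
    rw [List.pairwise_cons] at hpw
    refine ⟨hq.1, (hb q (by simp)).1, hq.2, (hb q (by simp)).2, ?_⟩
    exact ih q.1 q.2 hpw.2 (fun p hp => hb p (by simp [hp]))
      (fun p hp => hpw.1 p (List.mem_of_mem_head? hp))

end Stmt13Aux

/-- for `n ≥ 3` and `k ∈ [1, n-1]`, `χ_k^{(n)} = θ_k^{(n)}`. -/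
theorem stmt13 (n k : ℕ) (hn : 3 ≤ n) (h1 : 1 ≤ k) (h2 : k ≤ n - 1) :
    chi n k = theta n k := by
  classical
  set N := n - 1 with hN
  set G : Finset (List (ℕ × ℕ)) :=
    (Finset.Ioc 0 k).biUnion (fun b => (Stmt13Aux.FS N N k b).image (fun t => (k, b) :: t))
    with hG
  have hiff : ∀ l : List (ℕ × ℕ),
      (IsPositiveIndexingMatrix n l ∧ l.head?.map Prod.fst = some k) ↔ l ∈ G := by
    intro l
    constructor
    · rintro ⟨⟨⟨hlen1, hlen2, hent, hpw⟩, hpos⟩, hhead⟩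
      cases l with
      | nil => simp at hhead
      | cons p t =>
        obtain ⟨p1, p2⟩ := p
        simp only [List.head?_cons, Option.map_some, Option.some.injEq] at hhead
        subst hhead
        have hg : Stmt13Aux.Good N 0 0 ((p1, p2) :: t) := by
          apply Stmt13Aux.pairwise_good
          · refine hpw.imp_of_mem ?_
            intro a b ha hb hr
            have ha' := hpos a ha
            have hb' := hpos b hb
            refine ⟨hr.1, ?_⟩
            have hne : a.2 ≠ b.2 := fun h => by have := hr.2.2 h; omega
            have := hr.2.1
            omega
          · intro p hp
            exact ⟨by have := (hent p hp).1; omega, (hent p hp).2⟩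
          · intro p hp
            simp only [List.head?_cons, Option.mem_def, Option.some.injEq] at hp
            subst hp
            have := hpos (p1, p2) (by simp)
            exact ⟨this.1, this.2⟩
        obtain ⟨g1, g2, g3, g4, g5⟩ := hg
        simp only [hG, Finset.mem_biUnion, Finset.mem_Ioc, Finset.mem_image]
        exact ⟨p2, ⟨g3, g4⟩, t, (Stmt13Aux.mem_FS N N p1 p2 t (Nat.sub_le _ _)).mpr g5, rfl⟩
    · intro hl
      simp only [hG, Finset.mem_biUnion, Finset.mem_Ioc, Finset.mem_image] at hl
      obtain ⟨b, ⟨hb0, hbk⟩, t, ht, rfl⟩ := hl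
      have hg5 : Stmt13Aux.Good N k b t :=
        (Stmt13Aux.mem_FS N N k b t (Nat.sub_le _ _)).mp ht
      have hg : Stmt13Aux.Good N 0 0 ((k, b) :: t) := by
        simp only [Stmt13Aux.Good]
        exact ⟨h1, by omega, hb0, hbk, hg5⟩
      refine ⟨⟨⟨by simp, ?_, ?_, ?_⟩, ?_⟩, by simp⟩
      · have := Stmt13Aux.good_length N ((k, b) :: t) 0 0 hg
        omega
      · intro p hp
        have := Stmt13Aux.good_entry_bounds N ((k, b) :: t) 0 0 hg p hp
        exact ⟨by omega, this.2.2.2⟩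
      · refine (Stmt13Aux.good_pairwise N ((k, b) :: t) 0 0 hg).imp ?_
        intro a b' h
        exact ⟨h.1, le_of_lt h.2, fun heq => absurd heq (Nat.ne_of_lt h.2)⟩
      · intro p hp
        have := Stmt13Aux.good_entry_bounds N ((k, b) :: t) 0 0 hg p hp
        exact ⟨this.1, this.2.2.1⟩
  have htheta : theta n k = G.card := by
    unfold theta
    rw [Nat.card_congr (Equiv.subtypeEquivRight hiff)]
    exact Nat.card_eq_finsetCard G
  have hdisj : ∀ b ∈ Finset.Ioc 0 k, ∀ b' ∈ Finset.Ioc 0 k, b ≠ b' →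
      Disjoint ((Stmt13Aux.FS N N k b).image (fun t => (k, b) :: t))
        ((Stmt13Aux.FS N N k b').image (fun t => (k, b') :: t)) := by
    intro b _ b' _ hbb
    rw [Finset.disjoint_left]
    intro l hl1 hl2
    rw [Finset.mem_image] at hl1 hl2
    obtain ⟨t1, _, rfl⟩ := hl1
    obtain ⟨t2, _, heq⟩ := hl2
    injection heq with e1 _
    injection e1 with _ e3
    exact hbb e3.symm
  have hcard : G.card = ∑ b ∈ Finset.Ioc 0 k, Stmt13Aux.Tfun N k b := by
    rw [hG, Finset.card_biUnion hdisj]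
    refine Finset.sum_congr rfl fun b hb => ?_
    rw [Finset.card_image_of_injective _ (List.cons_injective)]
    exact Stmt13Aux.card_FS N N k b (Nat.sub_le _ _)
  have hc : ∀ b ∈ Finset.Ioc 0 k, Stmt13Aux.Tfun N k b = Stmt13Aux.c (k - b + 2) (N - k) := by
    intro b hb
    rw [Finset.mem_Ioc] at hb
    exact Stmt13Aux.Tfun_eq_c N k b hb.2 h2
  have hsum2 : ∑ b ∈ Finset.Ioc 0 k, Stmt13Aux.c (k - b + 2) (N - k)
      = ∑ j ∈ Finset.Icc 2 (k + 1), Stmt13Aux.c j (N - k) := by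
    refine Finset.sum_nbij' (i := fun b => k - b + 2) (j := fun j => k + 2 - j) ?_ ?_ ?_ ?_ ?_
    · intro b hb; rw [Finset.mem_Ioc] at hb; rw [Finset.mem_Icc]; omega
    · intro j hj; rw [Finset.mem_Icc] at hj; rw [Finset.mem_Ioc]; omega
    · intro b hb; rw [Finset.mem_Ioc] at hb; omega
    · intro j hj; rw [Finset.mem_Icc] at hj; omega
    · intro b _; rfl
  have htel : Stmt13Aux.c k ((N - k) + 1) = ∑ j ∈ Finset.Icc 2 (k + 1), Stmt13Aux.c j (N - k) :=
    Stmt13Aux.c_telescope k (N - k) h1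
  have hchi : chi n k = Stmt13Aux.c k (n - k) := rfl
  have hnk : n - k = (N - k) + 1 := by omega
  rw [htheta, hcard, Finset.sum_congr rfl hc, hsum2, ← htel, hchi, hnk]
end

section
/- The cardinality of the abacus blob monoid 𝔅l_{d,n} equals d^n · Σ_{k=1}^{n} χ_k^{(n)} (1+d)^k. -/
open Finset

namespace TLDiagram
variable {n : ℕ}

theorem ext' {D E : TLDiagram n} (h : D.f = E.f) : D = E := by
  cases D; cases E; simpa using h

instance : Finite (TLDiagram n) :=
  Finite.of_injective (fun D => D.f) (fun _ _ h => ext' h)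

lemma arc_or (D : TLDiagram n) (x : Fin (2*n)) : x < D.f x ∨ D.f x < x :=
  (lt_or_gt_of_ne (Ne.symm (D.noFixedPoint x)))

lemma card_isArc (D : TLDiagram n) : Nat.card {a // D.IsArc a} = n := by
  classical
  have h1 : (Finset.univ.filter (fun a => D.IsArc a)).card
      = (Finset.univ.filter (fun a => D.f a < a)).card := by
    apply Finset.card_bij (fun a _ => D.f a)
    · intro a ha
      simp only [Finset.mem_filter, Finset.mem_univ, true_and] at ha ⊢
      rw [D.involutive a]; exact ha
    · intro a ha b hb h
      have := congrArg D.f h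
      rwa [D.involutive, D.involutive] at this
    · intro b hb
      simp only [Finset.mem_filter, Finset.mem_univ, true_and] at hb ⊢
      exact ⟨D.f b, by show D.f b < D.f (D.f b); rw [D.involutive]; exact hb, D.involutive b⟩
  have h2 : (Finset.univ.filter (fun a => D.IsArc a)).card
      + (Finset.univ.filter (fun a => D.f a < a)).card = 2 * n := by
    have h3 := Finset.card_filter_add_card_filter_not (s := Finset.univ)
      (p := fun a : Fin (2*n) => D.IsArc a)
    rw [Finset.card_univ, Fintype.card_fin] at h3
    have h4 : Finset.univ.filter (fun a : Fin (2*n) => ¬ D.IsArc a)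
        = Finset.univ.filter (fun a => D.f a < a) := by
      apply Finset.filter_congr
      intro x _
      simp only [TLDiagram.IsArc, not_lt, eq_iff_iff]
      constructor
      · exact fun h => lt_of_le_of_ne h (D.noFixedPoint x)
      · exact le_of_lt
    rw [h4] at h3
    convert h3 using 2
  rw [Nat.card_eq_fintype_card, Fintype.card_subtype]
  omega

lemma exposedCount_le (D : TLDiagram n) : exposedCount D ≤ n := by
  have h := Nat.card_le_card_of_injective
    (fun a : {a // D.IsExposed a} => (⟨a.1, a.2.1⟩ : {a // D.IsArc a}))
    (fun a b h => Subtype.ext (congrArg Subtype.val h : _))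
  rw [card_isArc] at h
  exact h

lemma exposed_zero (D : TLDiagram n) (h : 0 < n) :
    D.IsExposed ⟨0, by omega⟩ := by
  constructor
  · rcases D.arc_or ⟨0, by omega⟩ with h1 | h1
    · exact h1
    · exact absurd h1 (by simp [Fin.lt_def])
  · intro c hc
    exact absurd hc.1 (by simp [Fin.lt_def])

lemma one_le_exposedCount (D : TLDiagram n) (h : 0 < n) : 1 ≤ exposedCount D := by
  have : Nonempty {a // D.IsExposed a} := ⟨⟨_, D.exposed_zero h⟩⟩
  exact Nat.one_le_iff_ne_zero.mpr (Nat.card_ne_zero.mpr ⟨this, inferInstance⟩)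

end TLDiagram

namespace TLDiagram

/-- the glued matching function, at the level of ℕ. -/
def gf {i j : ℕ} (A : TLDiagram i) (B : TLDiagram j) (x : ℕ) : ℕ :=
  if x = 0 then 2*i+1
  else if h : 1 ≤ x ∧ x ≤ 2*i then (A.f ⟨x-1, by omega⟩).val + 1
  else if x = 2*i+1 then 0
  else if h : x - (2*i+2) < 2*j then (B.f ⟨x - (2*i+2), h⟩).val + (2*i+2)
  else x

variable {i j : ℕ} (A : TLDiagram i) (B : TLDiagram j)

lemma gf_zero : gf A B 0 = 2*i+1 := by simp [gf]

lemma gf_inside {x : ℕ} (h1 : 1 ≤ x) (h2 : x ≤ 2*i) (hp : x - 1 < 2*i) :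
    gf A B x = (A.f ⟨x-1, hp⟩).val + 1 := by
  unfold gf
  rw [if_neg (by omega), dif_pos ⟨h1, h2⟩]

lemma gf_mid : gf A B (2*i+1) = 0 := by
  unfold gf
  rw [if_neg (by omega), dif_neg (by omega), if_pos rfl]

lemma gf_outside {x : ℕ} (h1 : 2*i+2 ≤ x) (h2 : x < 2*i+2*j+2) (hp : x - (2*i+2) < 2*j) :
    gf A B x = (B.f ⟨x - (2*i+2), hp⟩).val + (2*i+2) := by
  unfold gf
  rw [if_neg (by omega), dif_neg (by omega), if_neg (by omega), dif_pos hp]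

lemma gf_inside_mem {x : ℕ} (h1 : 1 ≤ x) (h2 : x ≤ 2*i) :
    1 ≤ gf A B x ∧ gf A B x ≤ 2*i := by
  have hp : x - 1 < 2*i := by omega
  rw [gf_inside A B h1 h2 hp]
  have := (A.f ⟨x-1, hp⟩).isLt
  omega

lemma gf_outside_mem {x : ℕ} (h1 : 2*i+2 ≤ x) (h2 : x < 2*i+2*j+2) :
    2*i+2 ≤ gf A B x ∧ gf A B x < 2*i+2*j+2 := by
  have hp : x - (2*i+2) < 2*j := by omega
  rw [gf_outside A B h1 h2 hp]
  have := (B.f ⟨x - (2*i+2), hp⟩).isLt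
  omega

lemma gf_lt {x : ℕ} (hx : x < 2*i+2*j+2) : gf A B x < 2*i+2*j+2 := by
  rcases Nat.eq_zero_or_pos x with h0 | h0
  · subst h0; rw [gf_zero]; omega
  rcases Nat.lt_or_ge x (2*i+1) with h1 | h1
  · have := gf_inside_mem A B h0 (by omega) (x := x); omega
  rcases Nat.eq_or_lt_of_le h1 with h2 | h2
  · rw [← h2, gf_mid]; omega
  · have := gf_outside_mem A B (by omega) hx (x := x); omega

lemma gf_gf {x : ℕ} (hx : x < 2*i+2*j+2) : gf A B (gf A B x) = x := by
  rcases Nat.eq_zero_or_pos x with h0 | h0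
  · subst h0; rw [gf_zero, gf_mid]
  rcases Nat.lt_or_ge x (2*i+1) with h1 | h1
  · have hp : x - 1 < 2*i := by omega
    rw [gf_inside A B h0 (by omega) hp]
    have hy := (A.f ⟨x-1, hp⟩).isLt
    have hp2 : (A.f ⟨x-1, hp⟩).val + 1 - 1 < 2*i := by omega
    rw [gf_inside A B (by omega) (by omega) hp2]
    have he : (⟨(A.f ⟨x-1, hp⟩).val + 1 - 1, hp2⟩ : Fin (2*i)) = A.f ⟨x-1, hp⟩ :=
      Fin.ext (show (A.f ⟨x-1, hp⟩).val + 1 - 1 = (A.f ⟨x-1, hp⟩).val by omega)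
    rw [he, A.involutive]
    show x - 1 + 1 = x
    omega
  rcases Nat.eq_or_lt_of_le h1 with h2 | h2
  · rw [← h2, gf_mid, gf_zero]
  · have hp : x - (2*i+2) < 2*j := by omega
    rw [gf_outside A B (by omega) hx hp]
    have hy := (B.f ⟨x - (2*i+2), hp⟩).isLt
    have hp2 : (B.f ⟨x - (2*i+2), hp⟩).val + (2*i+2) - (2*i+2) < 2*j := by omega
    rw [gf_outside A B (by omega) (by omega) hp2]
    have he : (⟨(B.f ⟨x - (2*i+2), hp⟩).val + (2*i+2) - (2*i+2), hp2⟩ : Fin (2*j))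
        = B.f ⟨x - (2*i+2), hp⟩ :=
      Fin.ext (show (B.f ⟨x - (2*i+2), hp⟩).val + (2*i+2) - (2*i+2)
        = (B.f ⟨x - (2*i+2), hp⟩).val by omega)
    rw [he, B.involutive]
    show x - (2*i+2) + (2*i+2) = x
    omega

lemma gf_ne {x : ℕ} (hx : x < 2*i+2*j+2) : gf A B x ≠ x := by
  rcases Nat.eq_zero_or_pos x with h0 | h0
  · subst h0; rw [gf_zero]; omega
  rcases Nat.lt_or_ge x (2*i+1) with h1 | h1
  · have hp : x - 1 < 2*i := by omega
    rw [gf_inside A B h0 (by omega) hp]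
    intro hcon
    exact A.noFixedPoint ⟨x-1, hp⟩
      (Fin.ext (show (A.f ⟨x-1, hp⟩).val = x - 1 by omega))
  rcases Nat.eq_or_lt_of_le h1 with h2 | h2
  · rw [← h2, gf_mid]; omega
  · have hp : x - (2*i+2) < 2*j := by omega
    rw [gf_outside A B (by omega) hx hp]
    intro hcon
    exact B.noFixedPoint ⟨x - (2*i+2), hp⟩
      (Fin.ext (show (B.f ⟨x - (2*i+2), hp⟩).val = x - (2*i+2) by omega))

lemma gf_noncrossing {a b : ℕ} (hab : a < b) (hb : b < gf A B a)
    (hc : gf A B a < gf A B b) (ha' : a < 2*i+2*j+2) (hb' : b < 2*i+2*j+2) : False := by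
  rcases Nat.eq_zero_or_pos a with h0 | h0
  · -- a = 0 : gf a = 2i+1, so b inside, but then gf b ≤ 2i < 2i+1
    subst h0
    rw [gf_zero] at hb hc
    have := gf_inside_mem A B (by omega : 1 ≤ b) (by omega) 
    omega
  rcases Nat.lt_or_ge a (2*i+1) with h1 | h1
  · -- a inside
    have hain := gf_inside_mem A B h0 (by omega) (x := a)
    have hbin : 1 ≤ b ∧ b ≤ 2*i := by omega
    have hbin' := gf_inside_mem A B hbin.1 hbin.2
    have hpa : a - 1 < 2*i := by omega
    have hpb : b - 1 < 2*i := by omega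
    rw [gf_inside A B h0 (by omega) hpa] at hb hc
    rw [gf_inside A B hbin.1 hbin.2 hpb] at hc
    exact A.noncrossing ⟨a-1, hpa⟩ ⟨b-1, hpb⟩
      (show (a-1 : ℕ) < (b-1 : ℕ) by omega)
      (show (b-1 : ℕ) < (A.f ⟨a-1, hpa⟩).val by omega)
      (show (A.f ⟨a-1, hpa⟩).val < (A.f ⟨b-1, hpb⟩).val by omega)
  rcases Nat.eq_or_lt_of_le h1 with h2 | h2
  · rw [← h2, gf_mid] at hb; omega
  · -- a outside
    have haout := gf_outside_mem A B (by omega : 2*i+2 ≤ a) ha'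
    have hbout : 2*i+2 ≤ b := by omega
    have hbout' := gf_outside_mem A B hbout hb'
    have hpa : a - (2*i+2) < 2*j := by omega
    have hpb : b - (2*i+2) < 2*j := by omega
    rw [gf_outside A B (by omega) ha' hpa] at hb hc
    rw [gf_outside A B hbout hb' hpb] at hc
    exact B.noncrossing ⟨a - (2*i+2), hpa⟩ ⟨b - (2*i+2), hpb⟩
      (show (a - (2*i+2) : ℕ) < (b - (2*i+2) : ℕ) by omega)
      (show (b - (2*i+2) : ℕ) < (B.f ⟨a - (2*i+2), hpa⟩).val by omega)
      (show (B.f ⟨a - (2*i+2), hpa⟩).val < (B.f ⟨b - (2*i+2), hpb⟩).val by omega)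

/-- glue two diagrams into a diagram on `n+1` points. -/
def glue (n i : ℕ) (hi : i ≤ n) (A : TLDiagram i) (B : TLDiagram (n-i)) :
    TLDiagram (n+1) where
  f x := ⟨gf A B x.val, by
    have h1 := x.isLt
    have h2 := gf_lt A B (x := x.val) (by omega)
    omega⟩
  involutive x := by
    apply Fin.ext
    have h1 := x.isLt
    exact gf_gf A B (by omega)
  noFixedPoint x := by
    intro hcon
    have h1 := x.isLt
    exact gf_ne A B (x := x.val) (by omega) (congrArg Fin.val hcon)
  noncrossing a b hab hbfa hfafb := by
    have h1 := a.isLt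
    have h2 := b.isLt
    refine gf_noncrossing A B (a := a.val) (b := b.val) hab ?_ ?_ (by omega) (by omega)
    · exact hbfa
    · exact hfafb

lemma glue_f_val (n i : ℕ) (hi : i ≤ n) (A : TLDiagram i) (B : TLDiagram (n-i))
    (x : Fin (2*(n+1))) : ((glue n i hi A B).f x).val = gf A B x.val := rfl

end TLDiagram

namespace TLDiagram

lemma two_mul_card {α : Type*} [LinearOrder α] [DecidableEq α] (S : Finset α) (f : α → α)
    (hinv : ∀ x ∈ S, f (f x) = x) (hmem : ∀ x ∈ S, f x ∈ S) (hne : ∀ x ∈ S, f x ≠ x) :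
    S.card = 2 * (S.filter (fun x => x < f x)).card := by
  classical
  have h1 : (S.filter (fun x => x < f x)).card = (S.filter (fun x => f x < x)).card := by
    apply Finset.card_bij (fun a _ => f a)
    · intro a ha
      simp only [Finset.mem_filter] at ha ⊢
      exact ⟨hmem a ha.1, by rw [hinv a ha.1]; exact ha.2⟩
    · intro a ha b hb h
      simp only [Finset.mem_filter] at ha hb
      rw [← hinv a ha.1, h, hinv b hb.1]
    · intro b hb
      simp only [Finset.mem_filter] at hb ⊢
      exact ⟨f b, ⟨hmem b hb.1, by rw [hinv b hb.1]; exact hb.2⟩, hinv b hb.1⟩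
  have h2 := Finset.card_filter_add_card_filter_not (s := S)
    (p := fun x => x < f x)
  have h3 : S.filter (fun x => ¬ x < f x) = S.filter (fun x => f x < x) := by
    apply Finset.filter_congr
    intro x hx
    simp only [not_lt, eq_iff_iff]
    exact ⟨fun h => lt_of_le_of_ne h (hne x hx), le_of_lt⟩
  rw [h3] at h2
  omega

/-- restriction of a TL-diagram to a closed interval of points. -/
def subdiagram {n' : ℕ} (D : TLDiagram n') (o k : ℕ)
    (hbound : o + 2*k ≤ 2*n')
    (hclosed : ∀ v (p : v < 2*n'), o ≤ v → v < o + 2*k →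
      o ≤ (D.f ⟨v, p⟩).val ∧ (D.f ⟨v, p⟩).val < o + 2*k) : TLDiagram k where
  f y := ⟨(D.f ⟨o + y.val, by have := y.isLt; omega⟩).val - o, by
    have hy := y.isLt
    have p1 : o + y.val < 2*n' := by omega
    have h1 := hclosed (o + y.val) p1 (by omega) (by omega)
    omega⟩
  involutive y := by
    have hy := y.isLt
    have p1 : o + y.val < 2*n' := by omega
    have h1 := hclosed (o + y.val) p1 (by omega) (by omega)
    have p2 : o + ((D.f ⟨o + y.val, p1⟩).val - o) < 2*n' := by omega
    apply Fin.ext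
    show (D.f ⟨o + ((D.f ⟨o + y.val, p1⟩).val - o), p2⟩).val - o = y.val
    have he : (⟨o + ((D.f ⟨o + y.val, p1⟩).val - o), p2⟩ : Fin (2*n')) = D.f ⟨o + y.val, p1⟩ :=
      Fin.ext (show o + ((D.f ⟨o + y.val, p1⟩).val - o) = (D.f ⟨o + y.val, p1⟩).val by omega)
    rw [he, D.involutive]
    show o + y.val - o = y.val
    omega
  noFixedPoint y := by
    intro hcon
    have hy := y.isLt
    have p1 : o + y.val < 2*n' := by omega
    have h1 := hclosed (o + y.val) p1 (by omega) (by omega)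
    have hval : (D.f ⟨o + y.val, p1⟩).val - o = y.val := congrArg Fin.val hcon
    have : D.f ⟨o + y.val, p1⟩ = ⟨o + y.val, p1⟩ :=
      Fin.ext (show (D.f ⟨o + y.val, p1⟩).val = o + y.val by omega)
    exact D.noFixedPoint _ this
  noncrossing a b hab hba hfab := by
    have ha := a.isLt
    have hb := b.isLt
    have pa : o + a.val < 2*n' := by omega
    have pb : o + b.val < 2*n' := by omega
    have hca := hclosed (o + a.val) pa (by omega) (by omega)
    have hcb := hclosed (o + b.val) pb (by omega) (by omega)
    have hab' : a.val < b.val := hab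
    have hba' : b.val < (D.f ⟨o + a.val, pa⟩).val - o := hba
    have hfab' : (D.f ⟨o + a.val, pa⟩).val - o < (D.f ⟨o + b.val, pb⟩).val - o := hfab
    exact D.noncrossing ⟨o + a.val, pa⟩ ⟨o + b.val, pb⟩
      (show o + a.val < o + b.val by omega)
      (show o + b.val < (D.f ⟨o + a.val, pa⟩).val by omega)
      (show (D.f ⟨o + a.val, pa⟩).val < (D.f ⟨o + b.val, pb⟩).val by omega)

lemma subdiagram_f_val {n' : ℕ} (D : TLDiagram n') (o k : ℕ) (hb) (hc) (y : Fin (2*k))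
    (p : o + y.val < 2*n') :
    ((subdiagram D o k hb hc).f y).val = (D.f ⟨o + y.val, p⟩).val - o := rfl

lemma glue_injective_idx {n i i' : ℕ} (hi : i ≤ n) (hi' : i' ≤ n)
    (A : TLDiagram i) (A' : TLDiagram i') (B : TLDiagram (n-i)) (B' : TLDiagram (n-i'))
    (h : glue n i hi A B = glue n i' hi' A' B') : i = i' := by
  have h0 := congrArg (fun E : TLDiagram (n+1) => (E.f ⟨0, by omega⟩).val) h
  simp only [glue_f_val] at h0
  rw [gf_zero, gf_zero] at h0
  omega

lemma glue_injective_parts {n i : ℕ} (hi : i ≤ n)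
    (A A' : TLDiagram i) (B B' : TLDiagram (n-i))
    (h : glue n i hi A B = glue n i hi A' B') : A = A' ∧ B = B' := by
  constructor
  · apply ext'
    funext y
    have hy := y.isLt
    have h0 := congrArg (fun E : TLDiagram (n+1) => (E.f ⟨y.val + 1, by omega⟩).val) h
    simp only [glue_f_val] at h0
    have hp : y.val + 1 - 1 < 2*i := by omega
    rw [gf_inside A B (by omega) (by omega) hp, gf_inside A' B' (by omega) (by omega) hp] at h0
    have he : (⟨y.val + 1 - 1, hp⟩ : Fin (2*i)) = y := Fin.ext (show y.val + 1 - 1 = y.val by omega)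
    rw [he] at h0
    exact Fin.ext (by omega)
  · apply ext'
    funext y
    have hy := y.isLt
    have h0 := congrArg (fun E : TLDiagram (n+1) => (E.f ⟨2*i + 2 + y.val, by omega⟩).val) h
    simp only [glue_f_val] at h0
    have hp : 2*i + 2 + y.val - (2*i+2) < 2*(n-i) := by omega
    rw [gf_outside A B (by omega) (by omega) hp, gf_outside A' B' (by omega) (by omega) hp] at h0
    have he : (⟨2*i + 2 + y.val - (2*i+2), hp⟩ : Fin (2*(n-i))) = y :=
      Fin.ext (show 2*i + 2 + y.val - (2*i+2) = y.val by omega)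
    rw [he] at h0
    exact Fin.ext (by omega)

lemma glue_surjective {n : ℕ} (D : TLDiagram (n+1)) :
    ∃ (i : ℕ) (hi : i ≤ n) (A : TLDiagram i) (B : TLDiagram (n-i)),
      glue n i hi A B = D := by
  have hN : (0:ℕ) < 2*(n+1) := by omega
  obtain ⟨m, hm2, hfz⟩ : ∃ (m : ℕ) (h : m < 2*(n+1)), D.f ⟨0, hN⟩ = ⟨m, h⟩ :=
    ⟨_, (D.f ⟨0, hN⟩).isLt, Fin.ext rfl⟩
  have hm1 : 1 ≤ m := by
    rcases Nat.eq_zero_or_pos m with h | h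
    · exfalso
      apply D.noFixedPoint ⟨0, hN⟩
      rw [hfz]
      exact Fin.ext (show m = 0 from h)
    · exact h
  -- inside closure
  have hin : ∀ v (p : v < 2*(n+1)), 1 ≤ v → v < m →
      1 ≤ (D.f ⟨v, p⟩).val ∧ (D.f ⟨v, p⟩).val < m := by
    intro v p h1 h2
    have hne0 : (D.f ⟨v, p⟩).val ≠ 0 := by
      intro h
      have e1 : D.f ⟨v, p⟩ = ⟨0, hN⟩ := Fin.ext h
      have e2 := congrArg D.f e1
      rw [D.involutive, hfz] at e2
      have : v = m := congrArg Fin.val e2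
      omega
    have hnem : (D.f ⟨v, p⟩).val ≠ m := by
      intro h
      have e1 : D.f ⟨v, p⟩ = D.f ⟨0, hN⟩ := by rw [hfz]; exact Fin.ext h
      have e2 := congrArg D.f e1
      rw [D.involutive, D.involutive] at e2
      have : v = 0 := congrArg Fin.val e2
      omega
    have hnlt : ¬ m < (D.f ⟨v, p⟩).val := by
      intro h
      apply D.noncrossing ⟨0, hN⟩ ⟨v, p⟩ (show (0:ℕ) < v by omega)
      · show v < (D.f ⟨0, hN⟩).val
        rw [hfz]; exact h2
      · show (D.f ⟨0, hN⟩).val < (D.f ⟨v, p⟩).val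
        rw [hfz]; exact h
    omega
  -- outside closure
  have hout : ∀ v (p : v < 2*(n+1)), m < v → m < (D.f ⟨v, p⟩).val := by
    intro v p hv
    have hne0 : (D.f ⟨v, p⟩).val ≠ 0 := by
      intro h
      have e1 : D.f ⟨v, p⟩ = ⟨0, hN⟩ := Fin.ext h
      have e2 := congrArg D.f e1
      rw [D.involutive, hfz] at e2
      have : v = m := congrArg Fin.val e2
      omega
    have hnem : (D.f ⟨v, p⟩).val ≠ m := by
      intro h
      have e1 : D.f ⟨v, p⟩ = D.f ⟨0, hN⟩ := by rw [hfz]; exact Fin.ext h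
      have e2 := congrArg D.f e1
      rw [D.involutive, D.involutive] at e2
      have : v = 0 := congrArg Fin.val e2
      omega
    by_contra hcon
    push_neg at hcon
    have h1 : 1 ≤ (D.f ⟨v, p⟩).val ∧ (D.f ⟨v, p⟩).val < m := by omega
    have h2 := hin (D.f ⟨v, p⟩).val (D.f ⟨v, p⟩).isLt h1.1 h1.2
    have e : D.f ⟨(D.f ⟨v, p⟩).val, (D.f ⟨v, p⟩).isLt⟩ = ⟨v, p⟩ := by
      have h4 : (⟨(D.f ⟨v, p⟩).val, (D.f ⟨v, p⟩).isLt⟩ : Fin (2*(n+1))) = D.f ⟨v, p⟩ :=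
        Fin.ext rfl
      rw [h4, D.involutive]
    have h3 : (D.f ⟨(D.f ⟨v, p⟩).val, (D.f ⟨v, p⟩).isLt⟩).val = v := congrArg Fin.val e
    omega
  -- parity : m is odd
  have hodd : ∃ i, m = 2*i+1 := by
    have hcard := two_mul_card (Finset.Ioo (⟨0, hN⟩ : Fin (2*(n+1))) ⟨m, hm2⟩) D.f
      ?_ ?_ ?_
    · rw [Fin.card_Ioo] at hcard
      refine ⟨(Finset.filter (fun x => x < D.f x)
        (Finset.Ioo (⟨0, hN⟩ : Fin (2*(n+1))) ⟨m, hm2⟩)).card, ?_⟩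
      have e1 : ((⟨m, hm2⟩ : Fin (2*(n+1))) : ℕ) = m := rfl
      have e2 : ((⟨0, hN⟩ : Fin (2*(n+1))) : ℕ) = 0 := rfl
      omega
    · intro x hx
      exact D.involutive x
    · intro x hx
      rw [Finset.mem_Ioo] at hx ⊢
      have h1 : 0 < x.val := hx.1
      have h2 : x.val < m := hx.2
      have h3 := hin x.val x.isLt (by omega) h2
      constructor
      · show (0:ℕ) < (D.f ⟨x.val, x.isLt⟩).val
        omega
      · show (D.f ⟨x.val, x.isLt⟩).val < m
        omega
    · intro x hx
      exact D.noFixedPoint x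
  obtain ⟨i, hmi⟩ := hodd
  have hi : i ≤ n := by omega
  have hb1 : 1 + 2*i ≤ 2*(n+1) := by omega
  have hb2 : (2*i+2) + 2*(n-i) ≤ 2*(n+1) := by omega
  have hc1 : ∀ v (p : v < 2*(n+1)), 1 ≤ v → v < 1 + 2*i →
      1 ≤ (D.f ⟨v, p⟩).val ∧ (D.f ⟨v, p⟩).val < 1 + 2*i := by
    intro v p h1 h2
    have := hin v p h1 (by omega)
    omega
  have hc2 : ∀ v (p : v < 2*(n+1)), 2*i+2 ≤ v → v < (2*i+2) + 2*(n-i) →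
      (2*i+2) ≤ (D.f ⟨v, p⟩).val ∧ (D.f ⟨v, p⟩).val < (2*i+2) + 2*(n-i) := by
    intro v p h1 h2
    have := hout v p (by omega)
    have := (D.f ⟨v, p⟩).isLt
    omega
  refine ⟨i, hi, subdiagram D 1 i hb1 hc1, subdiagram D (2*i+2) (n-i) hb2 hc2, ?_⟩
  apply ext'
  funext x
  apply Fin.ext
  obtain ⟨v, hv⟩ := x
  show gf _ _ v = (D.f ⟨v, hv⟩).val
  rcases Nat.eq_zero_or_pos v with h0 | h0
  · subst h0
    rw [gf_zero]
    have : (D.f ⟨0, hv⟩).val = m := congrArg Fin.val hfz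
    omega
  rcases Nat.lt_or_ge v (2*i+1) with h1 | h1
  · have hp : v - 1 < 2*i := by omega
    rw [gf_inside _ _ h0 (by omega) hp]
    have pX : 1 + (v - 1) < 2*(n+1) := by omega
    have hval : ((subdiagram D 1 i hb1 hc1).f ⟨v-1, hp⟩).val
        = (D.f ⟨1 + (v-1), pX⟩).val - 1 := rfl
    rw [hval]
    have he : (⟨1 + (v-1), pX⟩ : Fin (2*(n+1))) = ⟨v, hv⟩ :=
      Fin.ext (show 1 + (v-1) = v by omega)
    rw [he]
    have := hin v hv h0 (by omega)
    omega
  rcases Nat.eq_or_lt_of_le h1 with h2 | h2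
  · subst h2
    rw [gf_mid]
    have e1 : (⟨2*i+1, hv⟩ : Fin (2*(n+1))) = D.f ⟨0, hN⟩ := by
      rw [hfz]; exact Fin.ext (show (2*i+1 : ℕ) = m by omega)
    rw [e1, D.involutive]
  · have hp : v - (2*i+2) < 2*(n-i) := by omega
    rw [gf_outside _ _ (by omega) (by omega) hp]
    have pX : 2*i+2 + (v - (2*i+2)) < 2*(n+1) := by omega
    have hval : ((subdiagram D (2*i+2) (n-i) hb2 hc2).f ⟨v - (2*i+2), hp⟩).val
        = (D.f ⟨2*i+2 + (v - (2*i+2)), pX⟩).val - (2*i+2) := rfl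
    rw [hval]
    have he : (⟨2*i+2 + (v - (2*i+2)), pX⟩ : Fin (2*(n+1))) = ⟨v, hv⟩ :=
      Fin.ext (show 2*i+2 + (v - (2*i+2)) = v by omega)
    rw [he]
    have := hout v hv (by omega)
    have := (D.f ⟨v, hv⟩).isLt
    omega

end TLDiagram

namespace TLDiagram

variable {n i : ℕ}

lemma glue_exposed_outside (hi : i ≤ n) (A : TLDiagram i) (B : TLDiagram (n-i))
    {b : Fin (2*(n-i))} (hb : B.IsExposed b) (p : 2*i+2+b.val < 2*(n+1)) :
    (glue n i hi A B).IsExposed ⟨2*i+2+b.val, p⟩ := by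
  have hbv := b.isLt
  have hp : 2*i+2+b.val - (2*i+2) < 2*(n-i) := by omega
  have he : (⟨2*i+2+b.val - (2*i+2), hp⟩ : Fin (2*(n-i))) = b :=
    Fin.ext (show 2*i+2+b.val-(2*i+2) = b.val by omega)
  have hfval : gf A B (2*i+2+b.val) = (B.f b).val + (2*i+2) := by
    rw [gf_outside A B (by omega) (by omega) hp, he]
  constructor
  · show (2*i+2+b.val : ℕ) < gf A B (2*i+2+b.val)
    rw [hfval]
    have harc : b.val < (B.f b).val := hb.1
    omega
  · rintro c ⟨hc1, hc2⟩
    obtain ⟨w, hw⟩ := c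
    have hc1' : w < 2*i+2+b.val := hc1
    have hc2' : gf A B (2*i+2+b.val) < gf A B w := hc2
    rw [hfval] at hc2'
    rcases Nat.eq_zero_or_pos w with h0 | h0
    · subst h0
      rw [gf_zero] at hc2'
      omega
    rcases Nat.lt_or_ge w (2*i+1) with h1 | h1
    · have := gf_inside_mem A B h0 (show w ≤ 2*i by omega)
      omega
    rcases Nat.eq_or_lt_of_le h1 with h2 | h2
    · rw [← h2, gf_mid] at hc2'
      omega
    · have hpw : w - (2*i+2) < 2*(n-i) := by omega
      rw [gf_outside A B (by omega) (by omega) hpw] at hc2'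
      exact hb.2 ⟨w - (2*i+2), hpw⟩
        ⟨show w - (2*i+2) < b.val by omega,
         show (B.f b).val < (B.f ⟨w-(2*i+2), hpw⟩).val by omega⟩

lemma glue_not_exposed_inside (hi : i ≤ n) (A : TLDiagram i) (B : TLDiagram (n-i))
    {v : ℕ} (p : v < 2*(n+1)) (h1 : 1 ≤ v) (h2 : v ≤ 2*i+1) :
    ¬ (glue n i hi A B).IsExposed ⟨v, p⟩ := by
  intro hexp
  rcases Nat.eq_or_lt_of_le h2 with h3 | h3
  · have harc : (v:ℕ) < gf A B v := hexp.1
    rw [h3, gf_mid] at harc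
    omega
  · apply hexp.2 ⟨0, by omega⟩
    constructor
    · show (0:ℕ) < v
      omega
    · show gf A B v < gf A B 0
      rw [gf_zero]
      have := gf_inside_mem A B h1 (show v ≤ 2*i by omega)
      omega

lemma glue_exposed_cases (hi : i ≤ n) (A : TLDiagram i) (B : TLDiagram (n-i))
    {a : Fin (2*(n+1))} (ha : (glue n i hi A B).IsExposed a) :
    a.val = 0 ∨ (2*i+2 ≤ a.val ∧ ∃ (hp : a.val - (2*i+2) < 2*(n-i)),
      B.IsExposed ⟨a.val - (2*i+2), hp⟩) := by
  obtain ⟨v, hv⟩ := a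
  rcases Nat.eq_zero_or_pos v with h0 | h0
  · left; exact h0
  right
  rcases Nat.lt_or_ge v (2*i+2) with h1 | h1
  · exact absurd ha (glue_not_exposed_inside hi A B hv h0 (by omega))
  have hp : v - (2*i+2) < 2*(n-i) := by omega
  refine ⟨h1, hp, ?_, ?_⟩
  · have harc : (v:ℕ) < gf A B v := ha.1
    rw [gf_outside A B (by omega) (by omega) hp] at harc
    show v - (2*i+2) < (B.f ⟨v - (2*i+2), hp⟩).val
    omega
  · rintro c' ⟨hc1, hc2⟩
    have hc'v := c'.isLt
    have hc1' : c'.val < v - (2*i+2) := hc1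
    apply ha.2 ⟨2*i+2+c'.val, by omega⟩
    constructor
    · show 2*i+2+c'.val < v
      omega
    · show gf A B v < gf A B (2*i+2+c'.val)
      have hpc : 2*i+2+c'.val - (2*i+2) < 2*(n-i) := by omega
      have he : (⟨2*i+2+c'.val - (2*i+2), hpc⟩ : Fin (2*(n-i))) = c' :=
        Fin.ext (show 2*i+2+c'.val-(2*i+2) = c'.val by omega)
      rw [gf_outside A B (by omega) (by omega) hp,
        gf_outside A B (by omega) (by omega) hpc, he]
      have hc2' : (B.f ⟨v - (2*i+2), hp⟩).val < (B.f c').val := hc2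
      omega

lemma exposedCount_glue (hi : i ≤ n) (A : TLDiagram i) (B : TLDiagram (n-i)) :
    exposedCount (glue n i hi A B) = exposedCount B + 1 := by
  classical
  let F : {b : Fin (2*(n-i)) // B.IsExposed b} ⊕ PUnit.{1} →
      {a : Fin (2*(n+1)) // (glue n i hi A B).IsExposed a} := fun x =>
    match x with
    | Sum.inl b => ⟨⟨2*i+2+b.1.val, by have := b.1.isLt; omega⟩,
        glue_exposed_outside hi A B b.2 _⟩
    | Sum.inr _ => ⟨⟨0, by omega⟩, exposed_zero _ (by omega)⟩
  have hF : Function.Bijective F := by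
    constructor
    · intro x y h
      have hval := congrArg (fun s : {a : Fin (2*(n+1)) // (glue n i hi A B).IsExposed a}
        => s.1.val) h
      match x, y with
      | Sum.inl b, Sum.inl b' =>
        have : 2*i+2+b.1.val = 2*i+2+b'.1.val := hval
        have : b.1 = b'.1 := Fin.ext (by omega)
        rw [Sum.inl.injEq]
        exact Subtype.ext this
      | Sum.inl b, Sum.inr u =>
        have h' : 2*i+2+b.1.val = 0 := hval
        exact absurd h' (by omega)
      | Sum.inr u, Sum.inl b =>
        have h' : 0 = 2*i+2+b.1.val := hval
        exact absurd h' (by omega)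
      | Sum.inr u, Sum.inr u' => rfl
    · rintro ⟨a, ha⟩
      rcases glue_exposed_cases hi A B ha with h0 | ⟨h1, hp, hexp⟩
      · exact ⟨Sum.inr PUnit.unit, Subtype.ext (Fin.ext (show (0:ℕ) = a.val from h0.symm))⟩
      · refine ⟨Sum.inl ⟨⟨a.val - (2*i+2), hp⟩, hexp⟩, ?_⟩
        exact Subtype.ext (Fin.ext (show 2*i+2 + (a.val - (2*i+2)) = a.val by omega))
  have hcard := Nat.card_eq_of_bijective F hF
  rw [Nat.card_sum] at hcard
  have h1 : Nat.card PUnit = 1 := Nat.card_unique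
  unfold exposedCount
  omega

end TLDiagram

lemma nat_card_sigma {ι : Type*} [Fintype ι] (f : ι → Type*) [∀ i, Finite (f i)] :
    Nat.card (Σ i, f i) = ∑ i, Nat.card (f i) := by
  letI : ∀ i, Fintype (f i) := fun i => Fintype.ofFinite _
  simp only [Nat.card_eq_fintype_card]
  exact Fintype.card_sigma

namespace TLDiagram

instance : Unique (TLDiagram 0) where
  default := ⟨fun x => x.elim0, fun x => x.elim0, fun x => x.elim0, fun x => x.elim0⟩
  uniq D := by
    apply ext'
    funext x
    exact x.elim0

lemma card_TLDiagram : ∀ n, Nat.card (TLDiagram n) = catalan n := by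
  intro n
  induction n using Nat.strong_induction_on with
  | _ n ih =>
    rcases n with _ | m
    · rw [Nat.card_unique, catalan_zero]
    · have hbij : Function.Bijective
          (fun x : Σ i : Fin (m+1), TLDiagram i.val × TLDiagram (m - i.val) =>
            glue m x.1.val (Nat.lt_succ_iff.mp x.1.isLt) x.2.1 x.2.2) := by
        constructor
        · rintro ⟨⟨i, hi⟩, A, B⟩ ⟨⟨i', hi'⟩, A', B'⟩ h
          have hii : i = i' := glue_injective_idx _ _ _ _ _ _ h
          subst hii
          obtain ⟨hA, hB⟩ := glue_injective_parts _ _ _ _ _ h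
          subst hA; subst hB
          rfl
        · intro D
          obtain ⟨i, hi, A, B, hg⟩ := glue_surjective D
          exact ⟨⟨⟨i, by omega⟩, A, B⟩, hg⟩
      have hcard := Nat.card_eq_of_bijective _ hbij
      rw [nat_card_sigma] at hcard
      rw [← hcard, catalan_succ]
      apply Finset.sum_congr rfl
      intro i _
      rw [Nat.card_prod, ih i.val (by omega), ih (m - i.val) (by
        have := i.isLt; omega)]

end TLDiagram

noncomputable def Ncount (n k : ℕ) : ℕ := Nat.card {D : TLDiagram n // exposedCount D = k}

lemma Ncount_zero_zero : Ncount 0 0 = 1 := by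
  have h : ∀ D : TLDiagram 0, exposedCount D = 0 := by
    intro D
    have : IsEmpty {a : Fin (2*0) // D.IsExposed a} := ⟨fun x => x.1.elim0⟩
    exact Nat.card_of_isEmpty
  have : Unique {D : TLDiagram 0 // exposedCount D = 0} :=
    { default := ⟨default, h _⟩
      uniq := fun x => Subtype.ext (Unique.uniq _ x.1) }
  exact Nat.card_unique

lemma Ncount_zero_of_lt {n k : ℕ} (h : n < k) : Ncount n k = 0 := by
  have : IsEmpty {D : TLDiagram n // exposedCount D = k} := by
    constructor
    rintro ⟨D, hD⟩
    have := TLDiagram.exposedCount_le D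
    omega
  exact Nat.card_of_isEmpty

lemma Ncount_succ_zero (n : ℕ) : Ncount (n+1) 0 = 0 := by
  have : IsEmpty {D : TLDiagram (n+1) // exposedCount D = 0} := by
    constructor
    rintro ⟨D, hD⟩
    have := D.one_le_exposedCount (by omega)
    omega
  exact Nat.card_of_isEmpty

lemma Ncount_succ_succ (n k : ℕ) :
    Ncount (n+1) (k+1) = ∑ i : Fin (n+1), catalan i.val * Ncount (n - i.val) k := by
  have hbij : Function.Bijective
      (fun x : Σ i : Fin (n+1),
          TLDiagram i.val × {B : TLDiagram (n - i.val) // exposedCount B = k} =>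
        (⟨TLDiagram.glue n x.1.val (Nat.lt_succ_iff.mp x.1.isLt) x.2.1 x.2.2.1, by
          rw [TLDiagram.exposedCount_glue, x.2.2.2]⟩ :
          {D : TLDiagram (n+1) // exposedCount D = k+1})) := by
    constructor
    · rintro ⟨⟨i, hi⟩, A, B, hB⟩ ⟨⟨i', hi'⟩, A', B', hB'⟩ h
      have h' : TLDiagram.glue n i (by omega) A B = TLDiagram.glue n i' (by omega) A' B' :=
        congrArg Subtype.val h
      have hii : i = i' := TLDiagram.glue_injective_idx (by omega) (by omega) A A' B B' h'
      subst hii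
      obtain ⟨hA, hBv⟩ := TLDiagram.glue_injective_parts (by omega) A A' B B' h'
      subst hA; subst hBv
      rfl
    · rintro ⟨D, hD⟩
      obtain ⟨i, hi, A, B, hg⟩ := TLDiagram.glue_surjective D
      have hB : exposedCount B = k := by
        rw [← hg, TLDiagram.exposedCount_glue] at hD
        omega
      exact ⟨⟨⟨i, by omega⟩, A, ⟨B, hB⟩⟩, Subtype.ext hg⟩
  have hcard := Nat.card_eq_of_bijective _ hbij
  rw [nat_card_sigma] at hcard
  rw [Ncount, ← hcard]
  apply Finset.sum_congr rfl
  intro i _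
  rw [Nat.card_prod, TLDiagram.card_TLDiagram]
  rfl

lemma sum_antidiagonalTuple_succ (g : ℕ → ℕ) (k s : ℕ) :
    ∑ t ∈ Finset.Nat.antidiagonalTuple (k+1) s, ∏ j, g (t j)
      = ∑ p ∈ Finset.HasAntidiagonal.antidiagonal s,
          g p.1 * ∑ t ∈ Finset.Nat.antidiagonalTuple k p.2, ∏ j, g (t j) := by
  have hrhs : ∀ p ∈ Finset.HasAntidiagonal.antidiagonal s,
      g p.1 * ∑ t ∈ Finset.Nat.antidiagonalTuple k p.2, ∏ j, g (t j)
        = ∑ t ∈ Finset.Nat.antidiagonalTuple k p.2, g p.1 * ∏ j, g (t j) := by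
    intro p _
    rw [Finset.mul_sum]
  rw [Finset.sum_congr rfl hrhs, Finset.sum_sigma']
  apply Finset.sum_nbij'
    (i := fun t => (⟨(t 0, s - t 0), Fin.tail t⟩ :
      Σ _p : ℕ × ℕ, (Fin k → ℕ)))
    (j := fun q => Fin.cons q.1.1 q.2)
  · intro t ht
    rw [Finset.Nat.mem_antidiagonalTuple] at ht
    rw [Fin.sum_univ_succ] at ht
    rw [Finset.mem_sigma, Finset.HasAntidiagonal.mem_antidiagonal, Finset.Nat.mem_antidiagonalTuple]
    constructor
    · show t 0 + (s - t 0) = s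
      omega
    · show ∑ j, Fin.tail t j = s - t 0
      simp only [Fin.tail]
      omega
  · intro q hq
    rw [Finset.mem_sigma, Finset.HasAntidiagonal.mem_antidiagonal,
      Finset.Nat.mem_antidiagonalTuple] at hq
    rw [Finset.Nat.mem_antidiagonalTuple]
    simp only [Fin.sum_univ_succ, Fin.cons_zero, Fin.cons_succ]
    rw [hq.2]
    exact hq.1
  · intro t ht
    exact Fin.cons_self_tail t
  · rintro ⟨⟨a, b⟩, q⟩ hq
    rw [Finset.mem_sigma, Finset.HasAntidiagonal.mem_antidiagonal,
      Finset.Nat.mem_antidiagonalTuple] at hq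
    have h1 : a + b = s := hq.1
    have h0 : Fin.cons (α := fun _ => ℕ) a q 0 = a := Fin.cons_zero _ _
    have htail : Fin.tail (Fin.cons (α := fun _ => ℕ) a q) = q := Fin.tail_cons _ _
    refine Sigma.ext ?_ ?_
    · show (Fin.cons (α := fun _ => ℕ) a q 0, s - Fin.cons (α := fun _ => ℕ) a q 0) = (a, b)
      rw [h0, show s - a = b by omega]
    · show HEq (Fin.tail (Fin.cons (α := fun _ => ℕ) a q)) q
      rw [htail]
  · intro t ht
    rw [Fin.prod_univ_succ]
    rfl

lemma chi_zero_zero : chi 0 0 = 1 := by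
  simp [chi, Finset.Nat.antidiagonalTuple_zero_zero]

lemma chi_succ_zero (n : ℕ) : chi (n+1) 0 = 0 := by
  simp [chi, Finset.Nat.antidiagonalTuple_zero_succ]

lemma chi_succ_succ (n k : ℕ) (hk : k ≤ n) :
    chi (n+1) (k+1) = ∑ i ∈ Finset.range (n-k+1), catalan i * chi (n-i) k := by
  unfold chi
  have h1 : (n+1) - (k+1) = n - k := by omega
  rw [h1, sum_antidiagonalTuple_succ]
  rw [Nat.sum_antidiagonal_eq_sum_range_succ
    (fun x y => catalan x * ∑ t ∈ Finset.Nat.antidiagonalTuple k y, ∏ j, catalan (t j)) (n-k)]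
  apply Finset.sum_congr rfl
  intro i hi
  rw [Finset.mem_range] at hi
  rw [show n - k - i = n - i - k by omega]

lemma Ncount_eq_chi : ∀ n k, k ≤ n → Ncount n k = chi n k := by
  intro n
  induction n using Nat.strong_induction_on with
  | _ n ih =>
    intro k hk
    rcases n with _ | n <;> rcases k with _ | k
    · rw [Ncount_zero_zero, chi_zero_zero]
    · omega
    · rw [Ncount_succ_zero, chi_succ_zero]
    · have hk' : k ≤ n := by omega
      rw [Ncount_succ_succ, chi_succ_succ n k hk']
      rw [Fin.sum_univ_eq_sum_range (fun i => catalan i * Ncount (n - i) k)]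
      rw [← Finset.sum_subset (Finset.range_subset_range.mpr (show n-k+1 ≤ n+1 by omega))
        (fun i _ hni => by
          rw [Finset.mem_range, not_lt] at hni
          rw [Ncount_zero_of_lt (show n - i < k by
            rw [Finset.mem_range] at *
            omega), mul_zero])]
      apply Finset.sum_congr rfl
      intro i hi
      rw [Finset.mem_range] at hi
      rw [ih (n - i) (by omega) k (by omega)]

lemma card_supported {α M : Type*} [Finite α] [Finite M] (z : M) (p : α → Prop) :
    Nat.card {f : α → M // ∀ a, ¬ p a → f a = z} = Nat.card M ^ Nat.card {a // p a} := by
  classical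
  have e : {f : α → M // ∀ a, ¬ p a → f a = z} ≃ ({a // p a} → M) :=
    { toFun := fun f a => f.1 a.1
      invFun := fun g => ⟨fun a => if h : p a then g ⟨a, h⟩ else z, fun a ha => dif_neg ha⟩
      left_inv := fun f => Subtype.ext (funext fun a => by
        by_cases h : p a
        · simp [h]
        · simp [h, f.2 a h])
      right_inv := fun g => funext fun a => dif_pos a.2 }
  rw [Nat.card_congr e, Nat.card_fun]

lemma nat_card_subtype {α : Type*} [Fintype α] (q : α → Prop) [DecidablePred q] :
    Nat.card {a // q a} = (Finset.univ.filter q).card := by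
  rw [Nat.card_eq_fintype_card, Fintype.card_subtype]

lemma sum_pow_powerset {α : Type*} [DecidableEq α] (T : Finset α) (d : ℕ) :
    ∑ S ∈ T.powerset, d ^ S.card = (1+d) ^ T.card := by
  have h := Finset.prod_add (fun _ : α => d) (fun _ => (1:ℕ)) T
  simp only [Finset.prod_const, one_pow, mul_one] at h
  rw [add_comm d 1] at h
  exact h.symm

/-- the cardinality of the abacus blob monoid `𝔅l_{d,n}` is
`d^n ⬝ Σ_{k=1}^{n} χ_k^{(n)} (1+d)^k`. -/
theorem stmt16 (d n : ℕ) (hd : 1 ≤ d) (hn : 1 ≤ n) :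
    Nat.card (AbacusBlobDiagram d n) =
      d ^ n * ∑ k ∈ Finset.Icc 1 n, chi n k * (1 + d) ^ k := by
  classical
  letI : NeZero d := ⟨by omega⟩
  letI : Fintype (TLDiagram n) := Fintype.ofFinite _
  have e : AbacusBlobDiagram d n ≃
      Σ D : TLDiagram n, Σ _blob : {b : Fin (2*n) → Bool // ∀ a, b a = true → D.IsExposed a},
        ({β : Fin (2*n) → ZMod d // ∀ a, ¬ D.IsArc a → β a = 0} ×
         {γ : Fin (2*n) → ZMod d // ∀ a, _blob.1 a = false → γ a = 0}) :=
    { toFun := fun x => ⟨x.base, ⟨x.blob, x.blob_exposed⟩,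
        ⟨x.beads₁, x.beads₁_arc⟩, ⟨x.beads₂, x.beads₂_blob⟩⟩
      invFun := fun y => ⟨y.1, y.2.1.1, y.2.1.2, y.2.2.1.1, y.2.2.2.1, y.2.2.1.2, y.2.2.2.2⟩
      left_inv := fun x => rfl
      right_inv := fun y => rfl }
  have fiber : ∀ D : TLDiagram n,
      Nat.card (Σ _blob : {b : Fin (2*n) → Bool // ∀ a, b a = true → D.IsExposed a},
        ({β : Fin (2*n) → ZMod d // ∀ a, ¬ D.IsArc a → β a = 0} ×
         {γ : Fin (2*n) → ZMod d // ∀ a, _blob.1 a = false → γ a = 0}))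
      = d^n * (1+d) ^ exposedCount D := by
    intro D
    letI : Fintype {b : Fin (2*n) → Bool // ∀ a, b a = true → D.IsExposed a} :=
      Fintype.ofFinite _
    rw [nat_card_sigma]
    have hβ : Nat.card {β : Fin (2*n) → ZMod d // ∀ a, ¬ D.IsArc a → β a = 0} = d ^ n := by
      rw [card_supported (0 : ZMod d) D.IsArc, Nat.card_zmod, D.card_isArc]
    have step : ∀ blob : {b : Fin (2*n) → Bool // ∀ a, b a = true → D.IsExposed a},
        Nat.card ({β : Fin (2*n) → ZMod d // ∀ a, ¬ D.IsArc a → β a = 0} ×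
          {γ : Fin (2*n) → ZMod d // ∀ a, blob.1 a = false → γ a = 0})
        = d^n * d ^ (Finset.univ.filter (fun a => blob.1 a = true)).card := by
      intro blob
      rw [Nat.card_prod, hβ]
      congr 1
      have e2 : {γ : Fin (2*n) → ZMod d // ∀ a, blob.1 a = false → γ a = 0}
          ≃ {γ : Fin (2*n) → ZMod d // ∀ a, ¬ (blob.1 a = true) → γ a = 0} :=
        Equiv.subtypeEquivRight (fun γ => by simp)
      rw [Nat.card_congr e2, card_supported (0 : ZMod d) (fun a => blob.1 a = true),
        Nat.card_zmod, nat_card_subtype]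
    rw [Finset.sum_congr rfl (fun blob _ => step blob), ← Finset.mul_sum]
    congr 1
    have hexp : exposedCount D
        = (Finset.univ.filter (fun a => D.IsExposed a)).card := nat_card_subtype _
    rw [hexp, ← sum_pow_powerset]
    refine Finset.sum_bij'
      (i := fun blob _ => Finset.univ.filter (fun a => blob.1 a = true))
      (j := fun S hS => (⟨fun a => decide (a ∈ S), fun a ha => by
        have haS : a ∈ S := of_decide_eq_true ha
        have hsub := Finset.mem_powerset.mp hS
        exact (Finset.mem_filter.mp (hsub haS)).2⟩ :
        {b : Fin (2*n) → Bool // ∀ a, b a = true → D.IsExposed a}))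
      ?_ ?_ ?_ ?_ ?_
    · intro blob _
      rw [Finset.mem_powerset]
      intro a ha
      rw [Finset.mem_filter] at ha ⊢
      exact ⟨ha.1, blob.2 a ha.2⟩
    · intro S hS
      exact Finset.mem_univ _
    · intro blob _
      apply Subtype.ext
      funext a
      simp
    · intro S hS
      ext a
      simp
    · intro blob _
      rfl
  rw [Nat.card_congr e, nat_card_sigma,
    Finset.sum_congr rfl (fun D _ => fiber D), ← Finset.mul_sum]
  congr 1
  have hgroup : ∑ D : TLDiagram n, (1+d) ^ exposedCount D
      = ∑ k ∈ Finset.range (n+1), Ncount n k * (1+d)^k := by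
    rw [← Finset.sum_fiberwise_of_maps_to (g := fun D : TLDiagram n => exposedCount D)
      (t := Finset.range (n+1))
      (fun D _ => Finset.mem_range.mpr (Nat.lt_succ_of_le (TLDiagram.exposedCount_le D)))]
    apply Finset.sum_congr rfl
    intro k hk
    rw [Finset.sum_congr rfl (fun D hD => by rw [(Finset.mem_filter.mp hD).2]),
      Finset.sum_const, smul_eq_mul]
    congr 1
    rw [Ncount, nat_card_subtype]
  rw [hgroup]
  have hsub : Finset.Icc 1 n ⊆ Finset.range (n+1) := by
    intro k hk
    rw [Finset.mem_Icc] at hk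
    rw [Finset.mem_range]
    omega
  rw [← Finset.sum_subset hsub (fun k hk hnk => by
    rw [Finset.mem_range] at hk
    rw [Finset.mem_Icc] at hnk
    have hk0 : k = 0 := by omega
    subst hk0
    obtain ⟨m, rfl⟩ : ∃ m, n = m + 1 := ⟨n - 1, by omega⟩
    rw [Ncount_succ_zero, zero_mul])]
  apply Finset.sum_congr rfl
  intro k hk
  rw [Finset.mem_Icc] at hk
  rw [Ncount_eq_chi n k hk.2]
end
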